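/- arXiv:2309.12480 — 7 statements merged into one kernel-verified Lean document; each statement's English description precedes it below -/
import Mathlib

section
/- Let L ∈ ℝ^{n×n} be the Laplacian matrix of a strongly connected weighted digraph, and let v ∈ ℝⁿ be a nonzero left eigenvector of L associated with the eigenvalue 0 (i.e., vᵀL = 0), normalized so that vᵀ1ₙ = 1. Then every entry of v is strictly positive and, setting V := diag(v), the matrix Q := V L + Lᵀ V is symmetric positive semidefinite and its kernel is exactly the span of the all-ones vector 1ₙ. -/
open Matrix Filter Set

noncomputable section

/-- `L` is the Laplacian matrix of a weighted digraph: nonpositive off-diagonal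
entries and zero row sums (`L 1ₙ = 0`). -/
def Matrix.IsLaplacian {ι : Type*} [Fintype ι] (L : Matrix ι ι ℝ) : Prop :=
  (∀ i j, i ≠ j → L i j ≤ 0) ∧ L.mulVec (fun _ => 1) = 0

/-- The digraph associated with `L` has an edge `a → b` exactly when `L b a < 0`, `a ≠ b`. -/
def Matrix.digraphEdge {ι : Type*} (L : Matrix ι ι ℝ) (a b : ι) : Prop :=
  a ≠ b ∧ L b a < 0

/-- The digraph associated with `L` is strongly connected: for every ordered pair of
distinct nodes there is a directed path from the first to the second. -/
def Matrix.IsStronglyConnectedDigraph {ι : Type*} (L : Matrix ι ι ℝ) : Prop :=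
  ∀ i j : ι, i ≠ j → Relation.TransGen L.digraphEdge i j

/-- `M` is a nonsingular M-matrix: nonpositive off-diagonal entries and every
(complex) eigenvalue has strictly positive real part. -/
def Matrix.IsNonsingularMMatrix {ι : Type*} [Fintype ι] [DecidableEq ι]
    (M : Matrix ι ι ℝ) : Prop :=
  (∀ i j, i ≠ j → M i j ≤ 0) ∧
  ∀ μ ∈ (M.map (fun a => (a : ℂ))).charpoly.roots, 0 < μ.re

/-- Euclidean norm of a vector. -/
def euclNorm {ι : Type*} [Fintype ι] (v : ι → ℝ) : ℝ := Real.sqrt (v ⬝ᵥ v)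

/-- For the Laplacian `L` of a strongly connected weighted digraph and
a nonzero left eigenvector `v` for the eigenvalue 0 normalized by `vᵀ1ₙ = 1`, the entries
of `v` are strictly positive and `Q := diag(v) L + Lᵀ diag(v)` is symmetric positive
semidefinite with kernel exactly the span of the all-ones vector. -/
theorem statement0 {n : ℕ} (L : Matrix (Fin n) (Fin n) ℝ)
    (hLap : L.IsLaplacian) (hSC : L.IsStronglyConnectedDigraph)
    (v : Fin n → ℝ) (hv_ne : v ≠ 0)
    (hv_left : Matrix.vecMul v L = 0)
    (hv_norm : v ⬝ᵥ (fun _ => 1) = 1) :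
    (∀ i, 0 < v i) ∧
    (Matrix.diagonal v * L + Lᵀ * Matrix.diagonal v)ᵀ
      = Matrix.diagonal v * L + Lᵀ * Matrix.diagonal v ∧
    (Matrix.diagonal v * L + Lᵀ * Matrix.diagonal v).PosSemidef ∧
    (∀ x : Fin n → ℝ,
      (Matrix.diagonal v * L + Lᵀ * Matrix.diagonal v).mulVec x = 0 ↔
        ∃ c : ℝ, x = fun _ => c) := by
  obtain ⟨hoff, hrow⟩ := hLap
  -- basic sum identities
  have h1 : ∀ i, ∑ j, L i j = 0 := by
    intro i
    have := congrFun hrow i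
    simpa [Matrix.mulVec, dotProduct] using this
  have h2 : ∀ j, ∑ i, v i * L i j = 0 := by
    intro j
    have := congrFun hv_left j
    simpa [Matrix.vecMul, dotProduct] using this
  have hsum : ∑ i, v i = 1 := by simpa [dotProduct] using hv_norm
  -- Positivity of v
  have hvpos : ∀ i, 0 < v i := by
    by_contra hcon
    push_neg at hcon
    obtain ⟨i₀, hi₀⟩ := hcon
    classical
    set S : Finset (Fin n) := Finset.univ.filter (fun i => v i ≤ 0) with hS
    have hi₀S : i₀ ∈ S := by simp [hS, hi₀]
    have hSne : S.Nonempty := ⟨i₀, hi₀S⟩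
    -- S ≠ univ
    have hSc : ∃ k, k ∉ S := by
      by_contra hall
      push_neg at hall
      have : (1 : ℝ) ≤ 0 := by
        rw [← hsum]
        exact Finset.sum_nonpos fun i _ => by
          have := hall i; simp [hS] at this; exact this
      linarith
    obtain ⟨k₀, hk₀⟩ := hSc
    -- total boundary flow
    have hT : ∑ i, v i * ∑ j ∈ S, L i j = 0 := by
      have : ∑ j ∈ S, ∑ i, v i * L i j = 0 :=
        Finset.sum_eq_zero fun j _ => h2 j
      rw [← this, Finset.sum_comm]
      exact Finset.sum_congr rfl fun i _ => Finset.mul_sum _ _ _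
    have hterm : ∀ i ∈ Finset.univ, v i * ∑ j ∈ S, L i j ≤ 0 := by
      intro i _
      by_cases hiS : i ∈ S
      · have hvi : v i ≤ 0 := by simpa [hS] using hiS
        have hpos : 0 ≤ ∑ j ∈ S, L i j := by
          have hsplit : ∑ j ∈ S, L i j + ∑ j ∈ Sᶜ, L i j = 0 := by
            rw [Finset.sum_add_sum_compl]; exact h1 i
          have : ∑ j ∈ Sᶜ, L i j ≤ 0 := by
            refine Finset.sum_nonpos fun j hj => ?_
            refine hoff i j fun hij => ?_
            rw [← hij] at hj; simp at hj; exact hj hiS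
          linarith
        exact mul_nonpos_of_nonpos_of_nonneg hvi hpos
      · have hvi : 0 ≤ v i := by
          have : ¬ v i ≤ 0 := by simpa [hS] using hiS
          linarith
        have hneg : ∑ j ∈ S, L i j ≤ 0 := by
          refine Finset.sum_nonpos fun j hj => ?_
          refine hoff i j fun hij => ?_
          rw [hij] at hiS; exact hiS hj
        exact mul_nonpos_of_nonneg_of_nonpos hvi hneg
    have hzero : ∀ i ∈ Finset.univ, v i * ∑ j ∈ S, L i j = 0 :=
      (Finset.sum_eq_zero_iff_of_nonpos hterm).mp hT
    -- no edges from S to the complement of S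
    have hnoedge : ∀ i, i ∉ S → ∀ j ∈ S, L i j = 0 := by
      intro i hiS j hj
      have hvi : 0 < v i := by
        have : ¬ v i ≤ 0 := by simpa [hS] using hiS
        linarith
      have hsi : ∑ j ∈ S, L i j = 0 := by
        have := hzero i (Finset.mem_univ i)
        rcases mul_eq_zero.mp this with h | h
        · exact absurd h (ne_of_gt hvi)
        · exact h
      have hnp : ∀ j ∈ S, L i j ≤ 0 := by
        intro j hj
        refine hoff i j fun hij => ?_
        rw [hij] at hiS; exact hiS hj
      exact (Finset.sum_eq_zero_iff_of_nonpos hnp).mp hsi j hj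
    -- reachability stays in S
    have hstay : ∀ a b, Relation.TransGen L.digraphEdge a b → a ∈ S → b ∈ S := by
      intro a b h
      induction h with
      | single h =>
        intro haS
        by_contra hbS
        exact absurd (hnoedge _ hbS _ haS) (ne_of_lt h.2)
      | tail h₁ h₂ ih =>
        intro haS
        have := ih haS
        by_contra hcS
        exact absurd (hnoedge _ hcS _ this) (ne_of_lt h₂.2)
    have hne : i₀ ≠ k₀ := fun h => hk₀ (h ▸ hi₀S)
    exact hk₀ (hstay i₀ k₀ (hSC i₀ k₀ hne) hi₀S)
  -- quadratic form identity
  have key : ∀ x : Fin n → ℝ,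
      x ⬝ᵥ (Matrix.diagonal v * L + Lᵀ * Matrix.diagonal v).mulVec x
        = ∑ i, ∑ j, (-(v i * L i j)) * (x i - x j)^2 := by
    intro x
    have lhs : x ⬝ᵥ (Matrix.diagonal v * L + Lᵀ * Matrix.diagonal v).mulVec x
        = 2 * ∑ i, ∑ j, v i * L i j * x i * x j := by
      simp only [Matrix.mulVec, dotProduct, Matrix.add_apply,
        Matrix.diagonal_mul, Matrix.mul_diagonal, Matrix.transpose_apply, Finset.mul_sum]
      have split : ∀ i j : Fin n, x i * ((v i * L i j + L j i * v j) * x j)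
          = v i * L i j * x i * x j + x i * (L j i * v j * x j) := fun i j => by ring
      simp only [split, Finset.sum_add_distrib]
      rw [Finset.sum_comm (s := Finset.univ) (t := Finset.univ)
        (f := fun i j => x i * (L j i * v j * x j))]
      rw [← Finset.sum_add_distrib]
      refine Finset.sum_congr rfl fun i _ => ?_
      rw [← Finset.sum_add_distrib]
      exact Finset.sum_congr rfl fun j _ => by ring
    rw [lhs]
    have expand : ∀ i j : Fin n, (-(v i * L i j)) * (x i - x j)^2
        = (-(v i * x i ^ 2)) * L i j + 2 * (v i * L i j * x i * x j)
          + (-(x j ^ 2)) * (v i * L i j) := by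
      intro i j; ring
    simp only [expand, Finset.sum_add_distrib]
    have e1 : ∑ i, ∑ j, (-(v i * x i ^ 2)) * L i j = 0 := by
      refine Finset.sum_eq_zero fun i _ => ?_
      rw [← Finset.mul_sum, h1, mul_zero]
    have e2 : ∑ i : Fin n, ∑ j, (-(x j ^ 2)) * (v i * L i j) = 0 := by
      rw [Finset.sum_comm]
      refine Finset.sum_eq_zero fun j _ => ?_
      rw [← Finset.mul_sum, h2, mul_zero]
    rw [e1, e2]
    simp only [zero_add, add_zero, Finset.mul_sum]
  -- each summand is nonnegative
  have hnn : ∀ x : Fin n → ℝ, ∀ i j : Fin n, 0 ≤ (-(v i * L i j)) * (x i - x j)^2 := by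
    intro x i j
    by_cases hij : i = j
    · subst hij; simp
    · have : 0 ≤ -(v i * L i j) := by
        have := mul_nonpos_of_nonneg_of_nonpos (le_of_lt (hvpos i)) (hoff i j hij)
        linarith
      positivity
  -- symmetry
  have hsymm : (Matrix.diagonal v * L + Lᵀ * Matrix.diagonal v)ᵀ
      = Matrix.diagonal v * L + Lᵀ * Matrix.diagonal v := by
    rw [Matrix.transpose_add, Matrix.transpose_mul, Matrix.transpose_mul,
      Matrix.transpose_transpose, Matrix.diagonal_transpose]
    exact add_comm _ _
  refine ⟨hvpos, hsymm, ?_, ?_⟩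
  · -- PosSemidef
    rw [Matrix.posSemidef_iff_dotProduct_mulVec]
    constructor
    · rw [Matrix.IsHermitian, Matrix.conjTranspose]
      convert hsymm using 1
      ext i j
      simp
      ring
    · intro x
      rw [show (star x : Fin n → ℝ) = x from rfl]
      rw [key x]
      exact Finset.sum_nonneg fun i _ => Finset.sum_nonneg fun j _ => hnn x i j
  · intro x
    constructor
    · intro hx
      -- x constant on edges
      have hq : ∑ i, ∑ j, (-(v i * L i j)) * (x i - x j)^2 = 0 := by
        rw [← key x, hx]; simp
      have hall : ∀ i ∈ Finset.univ, ∀ j ∈ Finset.univ,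
          (-(v i * L i j)) * (x i - x j)^2 = 0 := by
        intro i _
        have := (Finset.sum_eq_zero_iff_of_nonneg
          (fun i _ => Finset.sum_nonneg fun j _ => hnn x i j)).mp hq i (Finset.mem_univ i)
        exact fun j hj => (Finset.sum_eq_zero_iff_of_nonneg (fun j _ => hnn x i j)).mp this j hj
      have hedge : ∀ a b, L.digraphEdge a b → x a = x b := by
        rintro a b ⟨hab, hlt⟩
        have hco : 0 < -(v b * L b a) := by
          have := mul_neg_of_pos_of_neg (hvpos b) hlt
          linarith
        have := hall b (Finset.mem_univ b) a (Finset.mem_univ a)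
        rcases mul_eq_zero.mp this with h | h
        · exact absurd h (ne_of_gt hco)
        · have : x b = x a := by
            have := pow_eq_zero_iff (n := 2) (by norm_num) |>.mp h
            linarith
          exact this.symm
      have hpath : ∀ a b, Relation.TransGen L.digraphEdge a b → x a = x b := by
        intro a b h
        induction h with
        | single h => exact hedge _ _ h
        | tail h₁ h₂ ih => exact ih.trans (hedge _ _ h₂)
      have hnemp : Nonempty (Fin n) := by
        rcases isEmpty_or_nonempty (Fin n) with h | h
        · exfalso; apply hv_ne; funext i; exact (h.false i).elim
        · exact h
      obtain ⟨i₀⟩ := hnemp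
      refine ⟨x i₀, funext fun j => ?_⟩
      by_cases hji : j = i₀
      · rw [hji]
      · exact (hpath i₀ j (hSC i₀ j (Ne.symm hji))).symm
    · rintro ⟨c, rfl⟩
      have hc : (fun _ : Fin n => c) = c • (fun _ : Fin n => (1:ℝ)) := by
        funext i; simp
      rw [hc, Matrix.mulVec_smul, Matrix.add_mulVec]
      have hA : (Matrix.diagonal v * L).mulVec (fun _ => (1:ℝ)) = 0 := by
        rw [← Matrix.mulVec_mulVec, hrow, Matrix.mulVec_zero]
      have hB : (Lᵀ * Matrix.diagonal v).mulVec (fun _ => (1:ℝ)) = 0 := by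
        rw [← Matrix.mulVec_mulVec]
        have : (Matrix.diagonal v).mulVec (fun _ => (1:ℝ)) = v := by
          funext i; simp [Matrix.mulVec_diagonal]
        rw [this, Matrix.mulVec_transpose, hv_left]
      rw [hA, hB]
      simp
end
end

section
/- Let M ∈ ℝ^{n×n} be a nonsingular M-matrix. Then M is invertible, the vectors M⁻¹1ₙ and M⁻ᵀ1ₙ have strictly positive entries, the diagonal matrix R := diag(M⁻ᵀ1ₙ) · (diag(M⁻¹1ₙ))⁻¹ is positive definite, and the symmetric matrix S := R M + Mᵀ R is positive definite. -/
open Matrix Filter Set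

noncomputable section

section MMatrixAux

set_option maxHeartbeats 1000000

open Polynomial

attribute [local instance] Matrix.linftyOpNormedAddCommGroup Matrix.linftyOpNormedRing
  Matrix.linftyOpNormedAlgebra

local instance {n : ℕ} : CompleteSpace (Matrix (Fin n) (Fin n) ℂ) :=
  inferInstance

private lemma entry_norm_le {n : ℕ} (A : Matrix (Fin n) (Fin n) ℂ) (i j : Fin n) :
    ‖A i j‖ ≤ ‖A‖ := by
  have h1 : ‖A i j‖₊ ≤ ‖A‖₊ := by
    rw [Matrix.linfty_opNNNorm_def]
    calc ‖A i j‖₊ ≤ ∑ j' : Fin n, ‖A i j'‖₊ :=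
          Finset.single_le_sum (f := fun j' => ‖A i j'‖₊) (fun p _ => zero_le)
            (Finset.mem_univ j)
      _ ≤ Finset.univ.sup fun i' => ∑ j' : Fin n, ‖A i' j'‖₊ :=
          Finset.le_sup (f := fun i' => ∑ j' : Fin n, ‖A i' j'‖₊) (Finset.mem_univ i)
  exact h1

private lemma exists_pow_bound {n : ℕ} (hn : 0 < n) (B : Matrix (Fin n) (Fin n) ℂ) (lam : ℝ)
    (hz : ∀ z ∈ spectrum ℂ B, ‖z‖ < lam) :
    ∃ ρ : ℝ, 0 ≤ ρ ∧ ρ < lam ∧ ∀ᶠ k in atTop, ‖B ^ k‖ ≤ ρ ^ k := by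
  haveI : Nonempty (Fin n) := Fin.pos_iff_nonempty.mp hn
  have hlam0 : 0 < lam := by
    obtain ⟨z, hzmem⟩ := spectrum.nonempty B
    exact lt_of_le_of_lt (norm_nonneg z) (hz z hzmem)
  have hr : spectralRadius ℂ B < (lam.toNNReal : ENNReal) := by
    apply spectrum.spectralRadius_lt_of_forall_lt B
    intro z hzm
    have := hz z hzm
    rw [← NNReal.coe_lt_coe]
    rwa [coe_nnnorm, Real.coe_toNNReal _ hlam0.le]
  obtain ⟨q, hq1, hq2⟩ := exists_between hr
  have hqt : q ≠ ⊤ := (hq2.trans_le le_top).ne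
  set ρ : NNReal := q.toNNReal with hρ
  have hqρ : q = (ρ : ENNReal) := (ENNReal.coe_toNNReal hqt).symm
  have hρlam : (ρ : ℝ) < lam := by
    have h : (ρ : ENNReal) < (lam.toNNReal : ENNReal) := hqρ ▸ hq2
    rw [ENNReal.coe_lt_coe] at h
    have h2 := NNReal.coe_lt_coe.mpr h
    rwa [Real.coe_toNNReal _ hlam0.le] at h2
  have hev : ∀ᶠ k : ℕ in atTop, ((‖B ^ k‖₊ : ENNReal)) ^ (1/(k:ℝ)) < (ρ : ENNReal) := by
    have := spectrum.pow_nnnorm_pow_one_div_tendsto_nhds_spectralRadius B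
    exact this.eventually_lt_const (hqρ ▸ hq1)
  refine ⟨ρ, ρ.coe_nonneg, hρlam, ?_⟩
  filter_upwards [hev, eventually_ge_atTop 1] with k hk hk1
  have hk0 : (k : ℝ) ≠ 0 := by positivity
  have h2 : ((‖B ^ k‖₊ : ENNReal) ^ (1/(k:ℝ))) ^ (k : ℝ) < (ρ : ENNReal) ^ (k:ℝ) :=
    ENNReal.rpow_lt_rpow hk (by positivity)
  rw [← ENNReal.rpow_mul, one_div_mul_cancel hk0, ENNReal.rpow_one] at h2
  rw [ENNReal.rpow_natCast, ← ENNReal.coe_pow, ENNReal.coe_lt_coe] at h2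
  have h3 := NNReal.coe_le_coe.mpr h2.le
  rwa [coe_nnnorm, NNReal.coe_pow] at h3

private lemma entry_pow_nonneg {n : ℕ} {B : Matrix (Fin n) (Fin n) ℝ} (hB : ∀ i j, 0 ≤ B i j)
    (k : ℕ) (i j : Fin n) : 0 ≤ (B ^ k) i j := by
  induction k generalizing i j with
  | zero => simp [Matrix.one_apply]; positivity
  | succ m ih =>
    rw [pow_succ, Matrix.mul_apply]
    exact Finset.sum_nonneg fun p _ => mul_nonneg (ih i p) (hB p j)

private lemma neumann_summable {n : ℕ} {B : Matrix (Fin n) (Fin n) ℝ} {lam ρ : ℝ} (hρ0 : 0 ≤ ρ)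
    (hρlam : ρ < lam)
    (hbd : ∀ᶠ k in atTop, ∀ i j, |(B ^ k) i j| ≤ ρ ^ k) (i j : Fin n) :
    Summable fun k => (lam ^ k)⁻¹ * (B ^ k) i j := by
  have hlam0 : 0 < lam := lt_of_le_of_lt hρ0 hρlam
  have hgeo : Summable fun k : ℕ => (ρ / lam) ^ k :=
    summable_geometric_of_lt_one (by positivity) (by rwa [div_lt_one hlam0])
  apply Summable.of_norm_bounded_eventually_nat hgeo
  filter_upwards [hbd] with k hk
  rw [Real.norm_eq_abs, abs_mul, abs_inv, abs_pow, abs_of_pos hlam0, div_pow]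
  rw [inv_mul_eq_div, div_le_div_iff₀ (by positivity) (by positivity)]
  exact mul_le_mul_of_nonneg_right (hk i j) (by positivity)

private lemma neumann_left {n : ℕ} {B : Matrix (Fin n) (Fin n) ℝ} {lam ρ : ℝ} (hρ0 : 0 ≤ ρ)
    (hρlam : ρ < lam)
    (hbd : ∀ᶠ k in atTop, ∀ i j, |(B ^ k) i j| ≤ ρ ^ k) :
    (lam • (1 : Matrix (Fin n) (Fin n) ℝ) - B) *
      (Matrix.of fun i j => ∑' k : ℕ, lam⁻¹ * ((lam ^ k)⁻¹ * (B ^ k) i j)) = 1 := by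
  have hlam0 : 0 < lam := lt_of_le_of_lt hρ0 hρlam
  ext i j
  rw [Matrix.mul_apply]
  have hsum : ∀ p q : Fin n, Summable fun k => (lam ^ k)⁻¹ * (B ^ k) p q :=
    neumann_summable hρ0 hρlam hbd
  have step1 : ∀ p, (lam • (1 : Matrix (Fin n) (Fin n) ℝ) - B) i p *
      ∑' k : ℕ, lam⁻¹ * ((lam ^ k)⁻¹ * (B ^ k) p j)
      = ∑' k : ℕ, (lam • (1 : Matrix (Fin n) (Fin n) ℝ) - B) i p *
          (lam⁻¹ * ((lam ^ k)⁻¹ * (B ^ k) p j)) := fun p => (tsum_mul_left).symm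
  simp only [Matrix.of_apply, step1]
  rw [← Summable.tsum_finsetSum (fun p _ => ((hsum p j).mul_left _).mul_left _)]
  have key : ∀ k : ℕ, (∑ p, (lam • (1 : Matrix (Fin n) (Fin n) ℝ) - B) i p *
      (lam⁻¹ * ((lam ^ k)⁻¹ * (B ^ k) p j)))
      = (lam ^ k)⁻¹ * (B ^ k) i j - (lam ^ (k+1))⁻¹ * (B ^ (k+1)) i j := by
    intro k
    have expand : ∀ p, (lam • (1 : Matrix (Fin n) (Fin n) ℝ) - B) i p *
        (lam⁻¹ * ((lam ^ k)⁻¹ * (B ^ k) p j))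
        = (lam ^ k)⁻¹ * ((1 : Matrix (Fin n) (Fin n) ℝ) i p * (B ^ k) p j)
          - (lam ^ (k+1))⁻¹ * (B i p * (B ^ k) p j) := by
      intro p
      simp only [Matrix.sub_apply, Matrix.smul_apply, smul_eq_mul]
      field_simp
      ring
    rw [Finset.sum_congr rfl fun p _ => expand p, Finset.sum_sub_distrib,
      ← Finset.mul_sum, ← Finset.mul_sum, ← Matrix.mul_apply, ← Matrix.mul_apply,
      Matrix.one_mul, ← pow_succ']
  rw [tsum_congr key]
  have hs1 := hsum i j
  have hs2 : Summable fun k => (lam ^ (k+1))⁻¹ * (B ^ (k+1)) i j :=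
    (summable_nat_add_iff 1).mpr hs1
  rw [Summable.tsum_sub hs1 hs2]
  have htail : ∑' k : ℕ, (lam ^ (k+1))⁻¹ * (B ^ (k+1)) i j
      = (∑' k : ℕ, (lam ^ k)⁻¹ * (B ^ k) i j) - (lam ^ 0)⁻¹ * (B ^ 0) i j := by
    rw [Summable.tsum_eq_zero_add hs1]; ring
  rw [htail]
  simp [Matrix.one_apply]

private lemma neumann {n : ℕ} {B : Matrix (Fin n) (Fin n) ℝ} {lam ρ : ℝ} (hρ0 : 0 ≤ ρ)
    (hρlam : ρ < lam)
    (hbd : ∀ᶠ k in atTop, ∀ i j, |(B ^ k) i j| ≤ ρ ^ k) :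
    ∃ T : Matrix (Fin n) (Fin n) ℝ,
      (lam • (1 : Matrix (Fin n) (Fin n) ℝ) - B) * T = 1 ∧
      T * (lam • (1 : Matrix (Fin n) (Fin n) ℝ) - B) = 1 ∧
      ((∀ i j, 0 ≤ B i j) → ∀ i j, 0 ≤ T i j) := by
  have hlam0 : 0 < lam := lt_of_le_of_lt hρ0 hρlam
  refine ⟨Matrix.of fun i j => ∑' k : ℕ, lam⁻¹ * ((lam ^ k)⁻¹ * (B ^ k) i j),
    neumann_left hρ0 hρlam hbd, ?_, ?_⟩
  · have hbdT : ∀ᶠ k in atTop, ∀ i j, |(Bᵀ ^ k) i j| ≤ ρ ^ k := by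
      filter_upwards [hbd] with k hk i j
      rw [← Matrix.transpose_pow, Matrix.transpose_apply]
      exact hk j i
    have h := neumann_left hρ0 hρlam hbdT
    have h2 := congrArg Matrix.transpose h
    rw [Matrix.transpose_mul, Matrix.transpose_sub, Matrix.transpose_smul,
      Matrix.transpose_one, Matrix.transpose_transpose] at h2
    convert h2 using 2
    ext i j
    simp only [Matrix.transpose_apply, Matrix.of_apply]
    refine tsum_congr fun k => ?_
    rw [← Matrix.transpose_pow, Matrix.transpose_apply]
  · intro hB i j
    refine tsum_nonneg fun k => ?_
    exact mul_nonneg (by positivity) (mul_nonneg (by positivity) (entry_pow_nonneg hB k i j))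

private lemma eval_charpoly_det {n : ℕ} (A : Matrix (Fin n) (Fin n) ℂ) (μ : ℂ) :
    A.charpoly.eval μ = (Matrix.scalar (Fin n) μ - A).det := by
  rw [Matrix.charpoly, eval_det, Matrix.matPolyEquiv_charmatrix]
  simp

private lemma mem_spectrum_iff_root {n : ℕ} (A : Matrix (Fin n) (Fin n) ℂ) (μ : ℂ) :
    μ ∈ spectrum ℂ A ↔ A.charpoly.eval μ = 0 := by
  rw [spectrum.mem_iff, eval_charpoly_det]
  constructor
  · intro h
    by_contra hd
    exact h ((Matrix.isUnit_iff_isUnit_det _).mpr (isUnit_iff_ne_zero.mpr (by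
      rwa [show (algebraMap ℂ (Matrix (Fin n) (Fin n) ℂ)) μ = Matrix.scalar (Fin n) μ
        from rfl])))
  · intro h hu
    rw [show (algebraMap ℂ (Matrix (Fin n) (Fin n) ℂ)) μ = Matrix.scalar (Fin n) μ
      from rfl] at hu
    have h2 := (Matrix.isUnit_iff_isUnit_det _).mp hu
    rw [h] at h2
    exact (not_isUnit_zero : ¬ IsUnit (0:ℂ)) h2

private theorem mmatrix_inv {n : ℕ} (M : Matrix (Fin n) (Fin n) ℝ)
    (hM : M.IsNonsingularMMatrix) : IsUnit M ∧ ∀ i j, 0 ≤ M⁻¹ i j := by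
  rcases Nat.eq_zero_or_pos n with hn | hn
  · subst hn
    refine ⟨(Matrix.isUnit_iff_isUnit_det _).mpr (by simp), fun i => i.elim0⟩
  set Mc : Matrix (Fin n) (Fin n) ℂ := M.map (fun a => (a : ℂ)) with hMc
  have hcne : Mc.charpoly ≠ 0 := Mc.charpoly_monic.ne_zero
  have hspec : ∀ μ ∈ spectrum ℂ Mc, 0 < μ.re := by
    intro μ hμ
    apply hM.2
    rw [mem_roots hcne]
    exact (mem_spectrum_iff_root Mc μ).mp hμ
  have hfin : ((fun μ : ℂ => ‖μ‖ ^ 2 / (2 * μ.re)) '' spectrum ℂ Mc).Finite := by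
    apply Set.Finite.image
    apply Set.Finite.subset (finite_setOf_isRoot hcne)
    intro μ hμ
    exact (mem_spectrum_iff_root Mc μ).mp hμ
  obtain ⟨l, hl⟩ := hfin.bddAbove
  simp only [mem_upperBounds, Set.mem_image, forall_exists_index, and_imp] at hl
  obtain ⟨d, hd⟩ := Finite.exists_le (fun i : Fin n => M i i)
  set lam : ℝ := max l (max d 0) + 1 with hlam
  have hlam0 : 0 < lam := by
    have h := le_trans (le_max_right d 0) (le_max_right l (max d 0))
    have h0 : (0:ℝ) ≤ max l (max d 0) := h
    simp only [hlam]; linarith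
  have hlaml : l < lam := by
    have := le_max_left l (max d 0); simp only [hlam]; linarith
  have hlamd : d < lam := by
    have := le_trans (le_max_left d 0) (le_max_right l (max d 0))
    simp only [hlam]; linarith
  set B : Matrix (Fin n) (Fin n) ℝ := lam • 1 - M with hB
  have hBnn : ∀ i j, 0 ≤ B i j := by
    intro i j
    by_cases h : i = j
    · subst h
      simp only [hB, Matrix.sub_apply, Matrix.smul_apply, Matrix.one_apply_eq, smul_eq_mul,
        mul_one]
      have := hd i
      linarith
    · simp only [hB, Matrix.sub_apply, Matrix.smul_apply, Matrix.one_apply_ne h, smul_eq_mul,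
        mul_zero, zero_sub, neg_nonneg]
      exact hM.1 i j h
  set Bc : Matrix (Fin n) (Fin n) ℂ := B.map (fun a => (a : ℂ)) with hBc
  have hBcEq : Bc = algebraMap ℂ (Matrix (Fin n) (Fin n) ℂ) ((lam : ℝ) : ℂ) - Mc := by
    ext i j
    by_cases h : i = j <;>
      simp [hBc, hB, hMc, Matrix.map_apply, Matrix.sub_apply, Matrix.smul_apply,
        Matrix.one_apply, h, Matrix.algebraMap_matrix_apply]
  have hzlt : ∀ z ∈ spectrum ℂ Bc, ‖z‖ < lam := by
    intro z hz
    rw [hBcEq, ← spectrum.singleton_sub_eq] at hz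
    obtain ⟨a, ha, μ, hμ, rfl⟩ := Set.mem_sub.mp hz
    rw [Set.mem_singleton_iff] at ha
    subst ha
    have hre := hspec μ hμ
    have hub : ‖μ‖ ^ 2 / (2 * μ.re) ≤ l := hl _ μ hμ rfl
    have h1 : ‖μ‖ ^ 2 ≤ l * (2 * μ.re) := by
      rwa [div_le_iff₀ (by linarith)] at hub
    have hsq : ∀ w : ℂ, ‖w‖ ^ 2 = w.re ^ 2 + w.im ^ 2 := by
      intro w
      rw [Complex.sq_norm, Complex.normSq_apply]
      ring
    have hn2 : ‖(lam : ℂ) - μ‖ ^ 2 = lam ^ 2 - 2 * lam * μ.re + ‖μ‖ ^ 2 := by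
      rw [hsq, hsq]
      simp [Complex.sub_re, Complex.sub_im, Complex.ofReal_re, Complex.ofReal_im]
      ring
    nlinarith [norm_nonneg ((lam : ℂ) - μ), norm_nonneg μ]
  obtain ⟨ρ, hρ0, hρlam, hbdC⟩ := exists_pow_bound hn Bc lam hzlt
  have hbd : ∀ᶠ k in atTop, ∀ i j, |(B ^ k) i j| ≤ ρ ^ k := by
    filter_upwards [hbdC] with k hk i j
    have hpow : Bc ^ k = (B ^ k).map (fun a => (a : ℂ)) := by
      rw [hBc]
      exact (map_pow (Complex.ofRealHom.mapMatrix) B k).symm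
    have he : ((Bc ^ k) i j) = (((B ^ k) i j : ℝ) : ℂ) := by rw [hpow, Matrix.map_apply]
    have hle : ‖(Bc ^ k) i j‖ ≤ ‖Bc ^ k‖ := entry_norm_le _ i j
    rw [he, Complex.norm_real, Real.norm_eq_abs] at hle
    exact le_trans hle hk
  obtain ⟨T, hT1, hT2, hTnn⟩ := neumann hρ0 hρlam hbd
  have hMB : lam • (1 : Matrix (Fin n) (Fin n) ℝ) - B = M := by rw [hB, sub_sub_cancel]
  rw [hMB] at hT1 hT2
  refine ⟨⟨⟨M, T, hT1, hT2⟩, rfl⟩, ?_⟩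
  rw [Matrix.inv_eq_right_inv hT1]
  exact hTnn hBnn

private lemma charpoly_transpose_eq {n : ℕ} {R : Type*} [CommRing R]
    (A : Matrix (Fin n) (Fin n) R) : Aᵀ.charpoly = A.charpoly := by
  rw [Matrix.charpoly, Matrix.charpoly,
    show Matrix.charmatrix Aᵀ = (Matrix.charmatrix A)ᵀ from ?_, Matrix.det_transpose]
  ext i j
  by_cases h : i = j
  · subst h; simp [Matrix.charmatrix_apply]
  · simp [Matrix.transpose_apply, Matrix.charmatrix_apply_ne _ _ _ h,
      Matrix.charmatrix_apply_ne _ _ _ (Ne.symm h)]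

private lemma transpose_mmatrix {n : ℕ} (M : Matrix (Fin n) (Fin n) ℝ)
    (hM : M.IsNonsingularMMatrix) : Mᵀ.IsNonsingularMMatrix := by
  constructor
  · exact fun i j hij => hM.1 j i (Ne.symm hij)
  · intro μ hμ
    apply hM.2
    rwa [show (Mᵀ.map (fun a => (a : ℂ))) = (M.map (fun a => (a : ℂ)))ᵀ from rfl,
      charpoly_transpose_eq] at hμ

private theorem mmatrix_main {n : ℕ} (M : Matrix (Fin n) (Fin n) ℝ)
    (hM : M.IsNonsingularMMatrix) :
    IsUnit M ∧ ∀ i, 0 < M⁻¹.mulVec (fun _ => 1) i := by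
  obtain ⟨hU, hnn⟩ := mmatrix_inv M hM
  refine ⟨hU, ?_⟩
  set v := M⁻¹.mulVec (fun _ => 1) with hv
  have hv0 : ∀ i, 0 ≤ v i := by
    intro i
    show 0 ≤ (M⁻¹ *ᵥ fun _ => 1) i
    simp only [Matrix.mulVec, dotProduct]
    exact Finset.sum_nonneg fun j _ => mul_nonneg (hnn i j) zero_le_one
  have hMv : M.mulVec v = fun _ => 1 := by
    rw [hv, Matrix.mulVec_mulVec, Matrix.mul_nonsing_inv _
      ((Matrix.isUnit_iff_isUnit_det _).mp hU), Matrix.one_mulVec]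
  intro i
  rcases (hv0 i).lt_or_eq with h | h
  · exact h
  · exfalso
    have h1 : M.mulVec v i = 1 := by rw [hMv]
    rw [Matrix.mulVec, dotProduct, ← Finset.add_sum_erase _ _ (Finset.mem_univ i),
      ← h, mul_zero, zero_add] at h1
    have h2 : ∑ j ∈ Finset.univ.erase i, M i j * v j ≤ 0 :=
      Finset.sum_nonpos fun j hj =>
        mul_nonpos_iff.mpr (Or.inr ⟨hM.1 i j (Finset.ne_of_mem_erase hj).symm, hv0 j⟩)
    linarith

private lemma posDef_of_gdd {n : ℕ} (S : Matrix (Fin n) (Fin n) ℝ) (hsym : Sᵀ = S)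
    (hoff : ∀ i j, i ≠ j → S i j ≤ 0) (v : Fin n → ℝ) (hv : ∀ i, 0 < v i)
    (hSv : ∀ i, 0 < S.mulVec v i) : S.PosDef := by
  rw [Matrix.posDef_iff_dotProduct_mulVec]
  have hS' : ∀ a b, S a b = S b a := fun a b => by
    conv_rhs => rw [← hsym, Matrix.transpose_apply]
  constructor
  · rw [Matrix.IsHermitian]
    ext i j
    simp [Matrix.conjTranspose_apply, hS' i j]
  · intro x hx
    have hswap : ∀ f : Fin n → Fin n → ℝ,
        ∑ i, ∑ j, S i j * f j i = ∑ i, ∑ j, S i j * f i j := by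
      intro f
      rw [Finset.sum_comm]
      exact Finset.sum_congr rfl fun i _ => Finset.sum_congr rfl fun j _ => by rw [hS' i j]
    have hD : ∑ i, ∑ j, (S i j * (x j ^ 2 * v i / v j) / 2
        - S i j * (x i ^ 2 * v j / v i) / 2) = 0 := by
      simp only [Finset.sum_sub_distrib]
      rw [sub_eq_zero]
      have := hswap (fun i j => (x i ^ 2 * v j / v i) / 2)
      simp only [mul_div_assoc] at this ⊢
      exact this
    have key : x ⬝ᵥ S.mulVec x =
        (∑ i, S.mulVec v i * x i ^ 2 / v i) +
        ∑ i, ∑ j, (-(S i j)) * (x i * v j - x j * v i) ^ 2 / (2 * v i * v j) := by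
      calc x ⬝ᵥ S.mulVec x = ∑ i, ∑ j, x i * (S i j * x j) := by
            simp [dotProduct, Matrix.mulVec, Finset.mul_sum]
        _ = ∑ i, ∑ j, ((S i j * v j * x i ^ 2 / v i)
              + (-(S i j)) * (x i * v j - x j * v i) ^ 2 / (2 * v i * v j)
              + (S i j * (x j ^ 2 * v i / v j) / 2 - S i j * (x i ^ 2 * v j / v i) / 2)) := by
            refine Finset.sum_congr rfl fun i _ => Finset.sum_congr rfl fun j _ => ?_
            have hvi := (hv i).ne'
            have hvj := (hv j).ne'
            field_simp
            ring
        _ = _ := by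
            simp only [Finset.sum_add_distrib, hD, add_zero]
            congr 1
            refine Finset.sum_congr rfl fun i _ => ?_
            rw [Matrix.mulVec, dotProduct, Finset.sum_mul, Finset.sum_div]
    obtain ⟨i0, hi0⟩ := Function.ne_iff.mp hx
    have h1 : 0 < ∑ i, S.mulVec v i * x i ^ 2 / v i := by
      apply Finset.sum_pos'
      · exact fun i _ => div_nonneg (mul_nonneg (hSv i).le (sq_nonneg _)) (hv i).le
      · refine ⟨i0, Finset.mem_univ _, ?_⟩
        have hx2 : 0 < x i0 ^ 2 :=
          lt_of_le_of_ne (sq_nonneg _) (Ne.symm (pow_ne_zero 2 hi0))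
        exact div_pos (mul_pos (hSv i0) hx2) (hv i0)
    have h2 : 0 ≤ ∑ i, ∑ j, (-(S i j)) * (x i * v j - x j * v i) ^ 2 / (2 * v i * v j) := by
      refine Finset.sum_nonneg fun i _ => Finset.sum_nonneg fun j _ => ?_
      by_cases h : i = j
      · subst h; simp
      · exact div_nonneg (mul_nonneg (neg_nonneg.mpr (hoff i j h)) (sq_nonneg _))
          (mul_pos (mul_pos two_pos (hv i)) (hv j)).le
    have hpos : (0:ℝ) < x ⬝ᵥ S.mulVec x := by
      rw [key]; exact add_pos_of_pos_of_nonneg h1 h2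
    simpa [star_trivial] using hpos

end MMatrixAux

/-- A nonsingular M-matrix `M` is invertible, the vectors `M⁻¹1ₙ` and
`M⁻ᵀ1ₙ` are entrywise strictly positive, the diagonal matrix
`R := diag(M⁻ᵀ1ₙ)(diag(M⁻¹1ₙ))⁻¹` is positive definite, and `S := R M + Mᵀ R` is
symmetric positive definite. -/
theorem statement1 {n : ℕ} (M : Matrix (Fin n) (Fin n) ℝ)
    (hM : M.IsNonsingularMMatrix) :
    IsUnit M ∧
    (∀ i, 0 < M⁻¹.mulVec (fun _ => 1) i) ∧
    (∀ i, 0 < (Mᵀ)⁻¹.mulVec (fun _ => 1) i) ∧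
    (Matrix.diagonal ((Mᵀ)⁻¹.mulVec (fun _ => 1)) *
      (Matrix.diagonal (M⁻¹.mulVec (fun _ => 1)))⁻¹).PosDef ∧
    ((Matrix.diagonal ((Mᵀ)⁻¹.mulVec (fun _ => 1)) *
        (Matrix.diagonal (M⁻¹.mulVec (fun _ => 1)))⁻¹) * M +
      Mᵀ * (Matrix.diagonal ((Mᵀ)⁻¹.mulVec (fun _ => 1)) *
        (Matrix.diagonal (M⁻¹.mulVec (fun _ => 1)))⁻¹)).PosDef := by
  obtain ⟨hU, hv⟩ := mmatrix_main M hM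
  obtain ⟨hUT, hw⟩ := mmatrix_main Mᵀ (transpose_mmatrix M hM)
  set v := M⁻¹.mulVec (fun _ => 1) with hvdef
  set w := (Mᵀ)⁻¹.mulVec (fun _ => 1) with hwdef
  have hMv : M.mulVec v = fun _ => 1 := by
    rw [hvdef, Matrix.mulVec_mulVec, Matrix.mul_nonsing_inv _
      ((Matrix.isUnit_iff_isUnit_det _).mp hU), Matrix.one_mulVec]
  have hMw : Mᵀ.mulVec w = fun _ => 1 := by
    rw [hwdef, Matrix.mulVec_mulVec, Matrix.mul_nonsing_inv _
      ((Matrix.isUnit_iff_isUnit_det _).mp hUT), Matrix.one_mulVec]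
  have hdiaginv : (Matrix.diagonal v)⁻¹ = Matrix.diagonal (fun i => (v i)⁻¹) := by
    apply Matrix.inv_eq_right_inv
    rw [Matrix.diagonal_mul_diagonal,
      show (fun i => v i * (v i)⁻¹) = fun _ => (1:ℝ) from
        funext fun i => mul_inv_cancel₀ (hv i).ne', Matrix.diagonal_one]
  have hR : Matrix.diagonal w * (Matrix.diagonal v)⁻¹
      = Matrix.diagonal (fun i => w i * (v i)⁻¹) := by
    rw [hdiaginv, Matrix.diagonal_mul_diagonal]
  set r : Fin n → ℝ := fun i => w i * (v i)⁻¹ with hrdef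
  have hr : ∀ i, 0 < r i := fun i => mul_pos (hw i) (inv_pos.mpr (hv i))
  refine ⟨hU, hv, hw, ?_, ?_⟩
  · rw [hR]
    exact Matrix.PosDef.diagonal hr
  · rw [hR]
    apply posDef_of_gdd _ ?_ ?_ v hv ?_
    · rw [Matrix.transpose_add, Matrix.transpose_mul, Matrix.transpose_mul,
        Matrix.diagonal_transpose, Matrix.transpose_transpose, add_comm]
    · intro i j hij
      rw [Matrix.add_apply, Matrix.diagonal_mul, Matrix.mul_diagonal,
        Matrix.transpose_apply]
      have h1 := hM.1 i j hij
      have h2 := hM.1 j i (Ne.symm hij)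
      have h3 := hr i
      have h4 := hr j
      nlinarith
    · intro i
      rw [Matrix.add_mulVec, ← Matrix.mulVec_mulVec, ← Matrix.mulVec_mulVec, hMv]
      have hrv : Matrix.diagonal r *ᵥ v = w := by
        funext p
        rw [Matrix.mulVec_diagonal]
        exact inv_mul_cancel_right₀ (hv p).ne' (w p)
      rw [hrv, hMw]
      simp only [Pi.add_apply, Matrix.mulVec_diagonal, mul_one]
      linarith [hr i]
end
end

section
/- Consider n = n_ℓ + n_f scalar systems ẋᵢ = fᵢ(xᵢ) + uᵢ with fᵢ : ℝ → ℝ continuous, coupled by uᵢ = −γ Σⱼ a_{ij}(xᵢ − xⱼ) with γ > 0 and weights a_{ij} ≥ 0, so that the closed loop reads ẋ = F(x) − γ L x where F(x)ᵢ = fᵢ(xᵢ) and L is the Laplacian of the interconnection digraph. Assume L, after a relabeling of nodes, has the block lower-triangular form L = [[L_ℓ, 0], [−A, M]] where L_ℓ ∈ ℝ^{n_ℓ×n_ℓ} is the Laplacian matrix of a strongly connected weighted digraph, A ∈ ℝ^{n_f×n_ℓ} is entrywise nonnegative, M ∈ ℝ^{n_f×n_f} is a nonsingular M-matrix, and L 1ₙ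 = 0. Assume further that each node i is state strictly semipassive: there exist a continuously differentiable storage function Vᵢ : ℝ → ℝ≥0, a class 𝒦∞ function α̲ᵢ, a constant ρᵢ > 0, a continuous function Hᵢ : ℝ → ℝ, and a continuous function ψᵢ : ℝ≥0 → ℝ>0 such that α̲ᵢ(|s|) ≤ Vᵢ(s) for all s, Vᵢ′(s)(fᵢ(s) + u) ≤ 2us − Hᵢ(s) for all s, u ∈ ℝ, and Hᵢ(s) ≥ ψᵢ(|s|) whenever |s| ≥ ρᵢ. Then the solutions of the closed-loop system are globally uniformly ultimately bounded, uniformly in γ: for every γ₀ > 0 there exists r > 0 such that for every r₀ > 0 there exists T ≥ 0 such that for every γ ≥ γ₀ and every differentiable x : [0, ∞) → ℝⁿ satisfying ẋ(t) = F(x(t)) − γ L x(t) for all t ≥ 0 and |x(0)| ≤ r₀, one has |x(t)| ≤ r for all t ≥ T. -/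
open Matrix Filter Set

noncomputable section

/-- A class 𝒦∞ function: continuous, strictly increasing, unbounded, vanishing at 0
(viewed as a function `ℝ≥0 → ℝ≥0`, encoded on `Set.Ici 0`). -/
def IsClassKInfty (α : ℝ → ℝ) : Prop :=
  ContinuousOn α (Set.Ici 0) ∧ StrictMonoOn α (Set.Ici 0) ∧ α 0 = 0 ∧
  (∀ s, 0 ≤ s → 0 ≤ α s) ∧ Filter.Tendsto α Filter.atTop Filter.atTop

open Topology in
/-- Barrier / fencing lemma for the max of finitely many functions: if every coordinate
starts below the barrier `B`, and at every contact time of a maximal coordinate with the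
barrier the derivative of that coordinate is strictly below the derivative of the barrier,
then every coordinate stays below the barrier. -/
lemma sup_barrier {ι : Type*} [Fintype ι] [Nonempty ι] {x : ℝ → ι → ℝ} {d : ℝ → ι → ℝ}
    {a b : ℝ} {B B' : ℝ → ℝ}
    (hx : ∀ i, ContinuousOn (fun t => x t i) (Icc a b))
    (hd : ∀ t ∈ Ico a b, ∀ i, HasDerivWithinAt (fun s => x s i) (d t i) (Ici t) t)
    (hB : ContinuousOn B (Icc a b))
    (hB' : ∀ t ∈ Ico a b, HasDerivWithinAt B (B' t) (Ici t) t)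
    (ha : ∀ i, x a i ≤ B a)
    (bound : ∀ t ∈ Ico a b, ∀ i, x t i = B t → (∀ j, x t j ≤ x t i) → d t i < B' t) :
    ∀ t ∈ Icc a b, ∀ i, x t i ≤ B t := by
  classical
  have hne : (Finset.univ : Finset ι).Nonempty := Finset.univ_nonempty
  set g : ℝ → ℝ := fun t => Finset.univ.sup' hne (fun i => x t i) with hg
  have hgx : ∀ t i, x t i ≤ g t := fun t i => Finset.le_sup' _ (Finset.mem_univ i)
  have hgmem : ∀ t, ∃ i, g t = x t i := by
    intro t
    obtain ⟨i, _, hi⟩ := Finset.exists_mem_eq_sup' hne (fun i => x t i)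
    exact ⟨i, hi⟩
  have hact : ∀ t, (Finset.univ.filter (fun i => x t i = g t)).Nonempty := by
    intro t
    obtain ⟨i, hi⟩ := hgmem t
    exact ⟨i, Finset.mem_filter.2 ⟨Finset.mem_univ i, hi.symm⟩⟩
  set f' : ℝ → ℝ := fun t => (Finset.univ.filter (fun i => x t i = g t)).sup' (hact t)
    (fun i => d t i) with hf'def
  have hgcont : ContinuousOn g (Icc a b) :=
    ContinuousOn.finset_sup'_apply hne (fun i _ => hx i)
  have key : ∀ t ∈ Icc a b, g t ≤ B t := by
    refine image_le_of_liminf_slope_right_lt_deriv_boundary' (f' := f') hgcont ?_ ?_ hB hB' ?_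
    · -- liminf slope condition
      intro t ht r hr
      have hev : ∀ᶠ z in 𝓝[>] t, ∀ i, (x z i - g t) / (z - t) < r := by
        rw [eventually_all]
        intro i
        by_cases hi : x t i = g t
        · -- active coordinate
          have hdi : d t i < r := lt_of_le_of_lt (Finset.le_sup' (fun j => d t j)
              (Finset.mem_filter.2 ⟨Finset.mem_univ i, hi⟩)) hr
          have hslope : Tendsto (slope (fun s => x s i) t) (𝓝[>] t) (𝓝 (d t i)) :=
            (hasDerivWithinAt_iff_tendsto_slope' (lt_irrefl t)).1 (hd t ht i).Ioi_of_Ici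
          filter_upwards [hslope (Iio_mem_nhds hdi)] with z hz
          have : slope (fun s => x s i) t z < r := hz
          rwa [slope_def_field, hi] at this
        · -- inactive coordinate : the slope tends to -∞
          have hnum : Tendsto (fun z => x z i - g t) (𝓝[>] t) (𝓝 (x t i - g t)) := by
            have hc : ContinuousWithinAt (fun s => x s i) (Ici t) t :=
              (hd t ht i).continuousWithinAt
            have : Tendsto (fun s => x s i) (𝓝[>] t) (𝓝 (x t i)) :=
              hc.mono_left (nhdsWithin_mono t Ioi_subset_Ici_self)
            exact this.sub tendsto_const_nhds
          have hinv : Tendsto (fun z => (z - t)⁻¹) (𝓝[>] t) atTop := by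
            have h1 : Tendsto (fun z => z - t) (𝓝[>] t) (𝓝[>] (0:ℝ)) := by
              apply tendsto_nhdsWithin_of_tendsto_nhds_of_eventually_within
              · have : Tendsto (fun z : ℝ => z - t) (𝓝 t) (𝓝 (t - t)) :=
                  (continuous_id.sub continuous_const).tendsto t
                rw [sub_self] at this
                exact this.mono_left nhdsWithin_le_nhds
              · filter_upwards [self_mem_nhdsWithin] with z hz
                simpa using sub_pos.2 (show t < z from hz)
            exact tendsto_inv_nhdsGT_zero.comp h1
          have hbot : Tendsto (fun z => (x z i - g t) / (z - t)) (𝓝[>] t) atBot := by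
            simp only [div_eq_mul_inv]
            refine Tendsto.neg_mul_atTop ?_ hnum hinv
            have := lt_of_le_of_ne (hgx t i) hi
            linarith
          exact hbot.eventually (eventually_lt_atBot r)
      refine (hev.and self_mem_nhdsWithin).frequently.mono ?_
      rintro z ⟨hz, hz'⟩
      obtain ⟨j, hj⟩ := hgmem z
      rw [slope_def_field]
      calc (g z - g t) / (z - t) = (x z j - g t) / (z - t) := by rw [hj]
      _ < r := hz j
    · obtain ⟨i, hi⟩ := hgmem a
      rw [hi]; exact ha i
    · intro t ht hgt
      refine (Finset.sup'_lt_iff (hact t)).2 ?_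
      intro i hi
      rw [Finset.mem_filter] at hi
      refine bound t ht i (hi.2.trans hgt) ?_
      intro j
      exact le_of_le_of_eq (hgx t j) hi.2.symm
  intro t ht i
  exact (hgx t i).trans (key t ht)

lemma euclNorm_coord_le {ι : Type*} [Fintype ι] (v : ι → ℝ) (i : ι) : |v i| ≤ euclNorm v := by
  rw [euclNorm, dotProduct]
  rw [← Real.sqrt_mul_self_eq_abs (v i)]
  apply Real.sqrt_le_sqrt
  exact Finset.single_le_sum (fun j _ => mul_self_nonneg (v j)) (Finset.mem_univ i)

lemma euclNorm_le_of_forall {ι : Type*} [Fintype ι] {v : ι → ℝ} {c : ℝ} (hc : 0 ≤ c)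
    (h : ∀ i, |v i| ≤ c) : euclNorm v ≤ Real.sqrt (Fintype.card ι) * c := by
  rw [euclNorm, dotProduct, ← Real.sqrt_sq hc, ← Real.sqrt_mul (by positivity)]
  apply Real.sqrt_le_sqrt
  calc ∑ j, v j * v j ≤ ∑ _j : ι, c ^ 2 := by
        refine Finset.sum_le_sum fun j _ => ?_
        have := h j
        nlinarith [abs_nonneg (v j), le_abs_self (v j), neg_abs_le (v j)]
  _ = (Fintype.card ι) * c ^ 2 := by rw [Finset.sum_const, nsmul_eq_mul, Finset.card_univ]

/-- If `c * (fv + u) ≤ 2 * u * s - h` for all `u`, then `c = 2 * s`. -/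
lemma deriv_forced {c s fv h : ℝ} (hd : ∀ u : ℝ, c * (fv + u) ≤ 2 * u * s - h) : c = 2 * s := by
  by_contra hc
  have hc' : c - 2 * s ≠ 0 := fun hh => hc (by linarith)
  set u : ℝ := (-h - c * fv + 1) / (c - 2 * s) with hu
  have h1 := hd u
  have h2 : (c - 2 * s) * u = -h - c * fv + 1 := by
    rw [hu, mul_div_cancel₀ _ hc']
  nlinarith

/-- At a coordinate where a vector attains its maximum, a Laplacian-type matrix
(nonpositive off-diagonal entries, zero row sums) acts nonnegatively. -/
lemma laplacian_sign {ι : Type*} [Fintype ι] {L : Matrix ι ι ℝ}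
    (hoff : ∀ i j, i ≠ j → L i j ≤ 0) (hrow : L.mulVec (fun _ => 1) = 0)
    (v : ι → ℝ) (i : ι) (hmax : ∀ j, v j ≤ v i) : 0 ≤ L.mulVec v i := by
  have hs : ∑ j, L i j = 0 := by
    have := congrFun hrow i
    simpa [Matrix.mulVec, dotProduct] using this
  have hrw : L.mulVec v i = ∑ j, L i j * (v j - v i) := by
    simp only [Matrix.mulVec, dotProduct, mul_sub, Finset.sum_sub_distrib, ← Finset.sum_mul, hs,
      zero_mul, sub_zero]
  rw [hrw]
  refine Finset.sum_nonneg fun j _ => ?_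
  rcases eq_or_ne j i with h | h
  · simp [h]
  · have h1 := hoff i j (Ne.symm h); have h2 := hmax j; nlinarith

set_option maxHeartbeats 2000000 in
/-- main theorem: Global uniform ultimate boundedness, uniformly in the
coupling gain `γ`, of the network `ẋ = F(x) − γ L x` of state strictly semipassive nodes,
where (after relabeling, encoded by the index type `Fin nl ⊕ Fin nf`)
`L = [[Lℓ, 0], [−A, M]]` with `Lℓ` the Laplacian of a strongly connected digraph,
`A ≥ 0` entrywise, and `M` a nonsingular M-matrix. -/
theorem statement2 {nl nf : ℕ} (hnl : 0 < nl)
    (Lℓ : Matrix (Fin nl) (Fin nl) ℝ)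
    (A : Matrix (Fin nf) (Fin nl) ℝ)
    (M : Matrix (Fin nf) (Fin nf) ℝ)
    (L : Matrix (Fin nl ⊕ Fin nf) (Fin nl ⊕ Fin nf) ℝ)
    (hblock : L = Matrix.fromBlocks Lℓ 0 (-A) M)
    (hLℓ : Lℓ.IsLaplacian) (hSC : Lℓ.IsStronglyConnectedDigraph)
    (hA : ∀ i j, 0 ≤ A i j) (hM : M.IsNonsingularMMatrix)
    (hrow : L.mulVec (fun _ => 1) = 0)
    (f : (Fin nl ⊕ Fin nf) → ℝ → ℝ) (hf : ∀ i, Continuous (f i))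
    -- state strict semipassivity of every node:
    (V : (Fin nl ⊕ Fin nf) → ℝ → ℝ) (V' : (Fin nl ⊕ Fin nf) → ℝ → ℝ)
    (hV_nonneg : ∀ i s, 0 ≤ V i s)
    (hV_deriv : ∀ i s, HasDerivAt (V i) (V' i s) s)
    (hV'_cont : ∀ i, Continuous (V' i))
    (α : (Fin nl ⊕ Fin nf) → ℝ → ℝ) (hα : ∀ i, IsClassKInfty (α i))
    (hαV : ∀ i s, α i |s| ≤ V i s)
    (ρ : (Fin nl ⊕ Fin nf) → ℝ) (hρ : ∀ i, 0 < ρ i)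
    (H : (Fin nl ⊕ Fin nf) → ℝ → ℝ) (hH : ∀ i, Continuous (H i))
    (ψ : (Fin nl ⊕ Fin nf) → ℝ → ℝ) (hψ_cont : ∀ i, Continuous (ψ i))
    (hψ_pos : ∀ i s, 0 ≤ s → 0 < ψ i s)
    (hdiss : ∀ i s u, V' i s * (f i s + u) ≤ 2 * u * s - H i s)
    (hHψ : ∀ i s, ρ i ≤ |s| → ψ i |s| ≤ H i s) :
    ∀ γ₀ > (0:ℝ), ∃ r > (0:ℝ), ∀ r₀ > (0:ℝ), ∃ T ≥ (0:ℝ), ∀ γ ≥ γ₀,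
      ∀ x : ℝ → ((Fin nl ⊕ Fin nf) → ℝ),
        (∀ t ∈ Set.Ici (0:ℝ),
          HasDerivWithinAt x (fun i => f i (x t i) - γ * L.mulVec (x t) i)
            (Set.Ici 0) t) →
        euclNorm (x 0) ≤ r₀ →
        ∀ t, T ≤ t → euclNorm (x t) ≤ r := by
  classical
  haveI hne' : Nonempty (Fin nl ⊕ Fin nf) := ⟨Sum.inl ⟨0, hnl⟩⟩
  intro γ₀ hγ₀
  -- off-diagonal entries of `L` are nonpositive
  have hoff : ∀ i j, i ≠ j → L i j ≤ 0 := by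
    intro i j hij
    rw [hblock]
    rcases i with i | i <;> rcases j with j | j
    · have : i ≠ j := fun h => hij (by rw [h])
      simpa using hLℓ.1 i j this
    · simp
    · simpa using hA i j
    · have : i ≠ j := fun h => hij (by rw [h])
      simpa using hM.1 i j this
  -- the forced structure of the storage function derivative
  have hV2 : ∀ i s, V' i s = 2 * s := fun i s => deriv_forced (fun u => hdiss i s u)
  have h2sf : ∀ i s, 2 * s * f i s ≤ - H i s := by
    intro i s
    have h0 := hdiss i s 0
    rw [hV2 i s] at h0
    nlinarith [h0]
  -- the maximal threshold radius
  have hne : (Finset.univ : Finset (Fin nl ⊕ Fin nf)).Nonempty := Finset.univ_nonempty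
  set ρmax : ℝ := Finset.univ.sup' hne ρ with hρmaxdef
  have hρle : ∀ i, ρ i ≤ ρmax := fun i => Finset.le_sup' ρ (Finset.mem_univ i)
  have hρpos : 0 < ρmax := lt_of_lt_of_le (hρ (Classical.arbitrary _)) (hρle _)
  -- `f i` is negative beyond `ρmax` and positive below `-ρmax`
  have hfneg : ∀ i s, ρmax ≤ s → f i s < 0 := by
    intro i s hsd
    have hs0 : 0 < s := lt_of_lt_of_le hρpos hsd
    have habs : ρ i ≤ |s| := by rw [abs_of_pos hs0]; exact (hρle i).trans hsd
    have h1 := hHψ i s habs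
    have h2 := hψ_pos i |s| (abs_nonneg s)
    have h3 := h2sf i s
    nlinarith
  have hfpos : ∀ i s, s ≤ -ρmax → 0 < f i s := by
    intro i s hsd
    have hs0 : s < 0 := by linarith
    have habs : ρ i ≤ |s| := by rw [abs_of_neg hs0]; linarith [hρle i]
    have h1 := hHψ i s habs
    have h2 := hψ_pos i |s| (abs_nonneg s)
    have h3 := h2sf i s
    nlinarith
  -- the ultimate bound
  have hcard : (0:ℝ) < Fintype.card (Fin nl ⊕ Fin nf) := by
    exact_mod_cast Fintype.card_pos
  refine ⟨Real.sqrt (Fintype.card (Fin nl ⊕ Fin nf)) * ρmax,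
    mul_pos (Real.sqrt_pos.2 hcard) hρpos, ?_⟩
  intro r₀ hr₀
  set B0 : ℝ := max r₀ ρmax with hB0def
  have hρB0 : ρmax ≤ B0 := le_max_right _ _
  -- a uniform decay rate on the annulus `ρmax ≤ |s| ≤ B0`
  have hδex : ∀ i : Fin nl ⊕ Fin nf, ∃ δ : ℝ, 0 < δ ∧
      ∀ s ∈ Icc ρmax B0, f i s ≤ -δ ∧ -f i (-s) ≤ -δ := by
    intro i
    have hq : Continuous (fun s => max (f i s) (-f i (-s))) :=
      (hf i).max (((hf i).comp continuous_neg).neg)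
    obtain ⟨s0, hs0, hmax⟩ := isCompact_Icc.exists_isMaxOn
      (⟨ρmax, left_mem_Icc.2 hρB0⟩ : (Icc ρmax B0).Nonempty) hq.continuousOn
    refine ⟨-(max (f i s0) (-f i (-s0))), ?_, ?_⟩
    · have h1 : f i s0 < 0 := hfneg i s0 hs0.1
      have h2 : 0 < f i (-s0) := hfpos i (-s0) (by linarith [hs0.1])
      have : max (f i s0) (-f i (-s0)) < 0 := max_lt h1 (by linarith)
      linarith
    · intro s hs
      have hb := hmax hs
      simp only [neg_neg]
      constructor
      · exact le_trans (le_max_left _ _) hb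
      · exact le_trans (le_max_right _ _) hb
  choose δf hδpos hδ using hδex
  set δ : ℝ := Finset.univ.inf' hne δf with hδdef
  have hδmin : ∀ i, δ ≤ δf i := fun i => Finset.inf'_le _ (Finset.mem_univ i)
  have hδ0 : 0 < δ := (Finset.lt_inf'_iff hne).2 fun i _ => hδpos i
  have hfle : ∀ i, ∀ s ∈ Icc ρmax B0, f i s ≤ -δ := by
    intro i s hs
    have := (hδ i s hs).1
    linarith [hδmin i]
  have hfle' : ∀ i, ∀ s ∈ Icc ρmax B0, -f i (-s) ≤ -δ := by
    intro i s hs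
    have := (hδ i s hs).2
    linarith [hδmin i]
  -- the settling time
  set T : ℝ := (B0 - ρmax) / (δ / 2) with hTdef
  have hT0 : 0 ≤ T := div_nonneg (by linarith) (by linarith)
  refine ⟨T, hT0, ?_⟩
  intro γ hγ x hode hinit
  have hγpos : 0 < γ := lt_of_lt_of_le hγ₀ hγ
  set d : ℝ → (Fin nl ⊕ Fin nf) → ℝ := fun t i => f i (x t i) - γ * L.mulVec (x t) i with hddef
  have hdc : ∀ t ∈ Ici (0:ℝ), ∀ i,
      HasDerivWithinAt (fun s => x s i) (d t i) (Ici (0:ℝ)) t := by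
    intro t ht i
    exact (hasDerivWithinAt_pi.1 (hode t ht)) i
  have hcx : ∀ i, ContinuousOn (fun t => x t i) (Ici (0:ℝ)) := by
    intro i t ht
    exact (hdc t ht i).continuousWithinAt
  -- the moving barrier
  set Bf : ℝ → ℝ := fun t => B0 - δ / 2 * t with hBfdef
  have hBfT : δ / 2 * T = B0 - ρmax := by
    rw [hTdef]
    rw [mul_div_cancel₀ _ (by positivity : (δ:ℝ)/2 ≠ 0)]
  have hBfcont : Continuous Bf := by
    fun_prop
  have hBf' : ∀ t : ℝ, HasDerivAt Bf (-(δ/2)) t := by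
    intro t
    have h1 : HasDerivAt (fun t : ℝ => B0 - δ / 2 * t) (0 - δ/2 * 1) t :=
      (hasDerivAt_const t B0).sub ((hasDerivAt_id t).const_mul (δ/2))
    simpa using h1
  -- Phase A, upper bound
  have upA : ∀ t ∈ Icc (0:ℝ) T, ∀ i, x t i ≤ Bf t := by
    refine sup_barrier (d := d) (B' := fun _ => -(δ/2)) ?_ ?_ hBfcont.continuousOn ?_ ?_ ?_
    · intro i
      exact (hcx i).mono (Icc_subset_Ici_self)
    · intro t ht i
      exact (hdc t ht.1 i).mono (Ici_subset_Ici.2 ht.1)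
    · intro t _
      exact (hBf' t).hasDerivWithinAt
    · intro i
      have h1 := (le_abs_self (x 0 i)).trans ((euclNorm_coord_le (x 0) i).trans hinit)
      have : Bf 0 = B0 := by rw [hBfdef]; ring_nf
      rw [this]
      exact h1.trans (le_max_left _ _)
    · intro t ht i hxi hmax
      have ht0 : (0:ℝ) ≤ t := ht.1
      have hBt : Bf t ∈ Icc ρmax B0 := by
        constructor
        · have : δ / 2 * t < δ / 2 * T := by
            apply mul_lt_mul_of_pos_left ht.2 (by positivity)
          rw [hBfT] at this
          rw [hBfdef]
          simp only
          linarith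
        · rw [hBfdef]
          simp only
          nlinarith
      have hsign := laplacian_sign hoff hrow (x t) i hmax
      have hd1 : d t i ≤ f i (Bf t) := by
        rw [hddef]
        simp only
        rw [hxi]
        nlinarith
      have hd2 := hfle i (Bf t) hBt
      have : d t i ≤ -δ := hd1.trans hd2
      exact lt_of_le_of_lt this (by show -δ < -(δ/2); linarith)
  -- Phase A, lower bound
  have loA : ∀ t ∈ Icc (0:ℝ) T, ∀ i, -x t i ≤ Bf t := by
    refine sup_barrier (x := fun t i => -x t i) (d := fun t i => -d t i)
      (B' := fun _ => -(δ/2)) ?_ ?_ hBfcont.continuousOn ?_ ?_ ?_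
    · intro i
      exact ((hcx i).neg).mono (Icc_subset_Ici_self)
    · intro t ht i
      exact ((hdc t ht.1 i).mono (Ici_subset_Ici.2 ht.1)).neg
    · intro t _
      exact (hBf' t).hasDerivWithinAt
    · intro i
      have h1 := (neg_le_abs (x 0 i)).trans ((euclNorm_coord_le (x 0) i).trans hinit)
      have : Bf 0 = B0 := by rw [hBfdef]; ring_nf
      rw [this]
      exact h1.trans (le_max_left _ _)
    · intro t ht i hxi hmax
      replace hxi : -x t i = Bf t := hxi
      replace hmax : ∀ j, -x t j ≤ -x t i := hmax
      have ht0 : (0:ℝ) ≤ t := ht.1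
      have hBt : Bf t ∈ Icc ρmax B0 := by
        constructor
        · have : δ / 2 * t < δ / 2 * T := by
            apply mul_lt_mul_of_pos_left ht.2 (by positivity)
          rw [hBfT] at this
          rw [hBfdef]; simp only; linarith
        · rw [hBfdef]; simp only; nlinarith
      have hsign := laplacian_sign hoff hrow (fun j => -x t j) i hmax
      have hmv : L.mulVec (fun j => -x t j) i = -(L.mulVec (x t) i) := by
        show (L.mulVec (-(x t))) i = -((L.mulVec (x t)) i)
        rw [Matrix.mulVec_neg]
        simp
      rw [hmv] at hsign
      have hxv : x t i = -(Bf t) := by linarith [hxi]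
      have hd1 : -d t i ≤ -f i (-(Bf t)) := by
        rw [hddef]
        simp only
        rw [hxv]
        nlinarith
      have hd2 := hfle' i (Bf t) hBt
      have : -d t i ≤ -δ := hd1.trans hd2
      exact lt_of_le_of_lt this (by show -δ < -(δ/2); linarith)
  -- Phase B: after time `T`, stay inside the box of radius `ρmax`
  have hBfT' : Bf T = ρmax := by
    rw [hBfdef]; simp only; linarith [hBfT]
  have phaseB : ∀ t', T ≤ t' → ∀ i, |x t' i| ≤ ρmax := by
    intro t' ht'
    have hT0' : (0:ℝ) ≤ T := hT0
    have upB : ∀ t ∈ Icc T t', ∀ i, x t i ≤ ρmax := by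
      refine sup_barrier (d := d) (B := fun _ => ρmax) (B' := fun _ => (0:ℝ)) ?_ ?_
        continuousOn_const ?_ ?_ ?_
      · intro i
        exact (hcx i).mono (fun s hs => le_trans hT0 hs.1)
      · intro t ht i
        exact (hdc t (le_trans hT0 ht.1) i).mono (Ici_subset_Ici.2 (le_trans hT0 ht.1))
      · intro t _
        exact hasDerivWithinAt_const t _ ρmax
      · intro i
        have := upA T ⟨hT0, le_rfl⟩ i
        rwa [hBfT'] at this
      · intro t ht i hxi hmax
        replace hxi : x t i = ρmax := hxi
        have hsign := laplacian_sign hoff hrow (x t) i hmax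
        have hd1 : d t i ≤ f i ρmax := by
          rw [hddef]; simp only; rw [hxi]; nlinarith
        have hd2 := hfle i ρmax (left_mem_Icc.2 hρB0)
        have : d t i ≤ -δ := hd1.trans hd2
        exact lt_of_le_of_lt this (by show -δ < (0:ℝ); linarith)
    have loB : ∀ t ∈ Icc T t', ∀ i, -x t i ≤ ρmax := by
      refine sup_barrier (x := fun t i => -x t i) (d := fun t i => -d t i)
        (B := fun _ => ρmax) (B' := fun _ => (0:ℝ)) ?_ ?_ continuousOn_const ?_ ?_ ?_
      · intro i
        exact ((hcx i).neg).mono (fun s hs => le_trans hT0 hs.1)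
      · intro t ht i
        exact ((hdc t (le_trans hT0 ht.1) i).mono (Ici_subset_Ici.2 (le_trans hT0 ht.1))).neg
      · intro t _
        exact hasDerivWithinAt_const t _ ρmax
      · intro i
        have := loA T ⟨hT0, le_rfl⟩ i
        rwa [hBfT'] at this
      · intro t ht i hxi hmax
        replace hxi : -x t i = ρmax := hxi
        replace hmax : ∀ j, -x t j ≤ -x t i := hmax
        have hsign := laplacian_sign hoff hrow (fun j => -x t j) i hmax
        have hmv : L.mulVec (fun j => -x t j) i = -(L.mulVec (x t) i) := by
          show (L.mulVec (-(x t))) i = -((L.mulVec (x t)) i)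
          rw [Matrix.mulVec_neg]; simp
        rw [hmv] at hsign
        have hxv : x t i = -ρmax := by linarith [hxi]
        have hd1 : -d t i ≤ -f i (-ρmax) := by
          rw [hddef]; simp only; rw [hxv]; nlinarith
        have hd2 := hfle' i ρmax (left_mem_Icc.2 hρB0)
        have : -d t i ≤ -δ := hd1.trans hd2
        exact lt_of_le_of_lt this (by show -δ < (0:ℝ); linarith)
    intro i
    have h1 := upB t' ⟨ht', le_rfl⟩ i
    have h2 := loB t' ⟨ht', le_rfl⟩ i
    rw [abs_le]
    exact ⟨by linarith, h1⟩
  intro t ht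
  exact euclNorm_le_of_forall hρpos.le (phaseB t ht)
end
end

section
/- Under the same hypotheses as the main theorem (closed loop ẋ = F(x) − γ L x, with L block lower-triangular L = [[L_ℓ, 0], [−A, M]], L_ℓ the Laplacian of a strongly connected weighted digraph, A entrywise nonnegative, M a nonsingular M-matrix, L 1ₙ = 0, and each node state strictly semipassive with storage functions Vᵢ bounded below by class 𝒦∞ functions α̲ᵢ and dissipation rates Hᵢ, ψᵢ, ρᵢ), the solutions are globally uniformly bounded, uniformly in γ: for every r₀ > 0 and γ₀ > 0 there exists R ≥ r₀ such that for every γ ≥ γ₀ and every differentiable x : [0, ∞) → ℝⁿ satisfying ẋ(t) = F(x(t)) − γ L x(t) for all t ≥ 0 and |x(0)| ≤ r₀, one has |x(t)| ≤ R for all t ≥ 0. -/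
open Matrix Filter Set

noncomputable section

/-- If `a * u ≤ b` for all `u`, then `a = 0`. -/
lemma eq_zero_of_mul_le_forall {a b : ℝ} (h : ∀ u : ℝ, a * u ≤ b) : a = 0 := by
  by_contra ha
  have h1 := h ((b + 1) / a)
  rw [mul_div_cancel₀ _ ha] at h1
  linarith

/-- Maximum principle for `ẋ = f(x) − γ L x` with `L` having nonpositive
off-diagonal entries and zero row sums: if every component starts below `B`
and `f i s < 0` whenever `B < s`, then every component stays below `B`. -/
lemma max_principle {ι : Type*} [Fintype ι] [DecidableEq ι]
    (L : Matrix ι ι ℝ) (hLoff : ∀ i j, i ≠ j → L i j ≤ 0)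
    (hLrow : L.mulVec (fun _ => 1) = 0)
    (f : ι → ℝ → ℝ) (γ : ℝ) (hγ : 0 ≤ γ)
    (B : ℝ) (hfB : ∀ i s, B < s → f i s < 0)
    (x : ℝ → ι → ℝ)
    (hx : ∀ t ∈ Set.Ici (0:ℝ), HasDerivWithinAt x
        (fun i => f i (x t i) - γ * L.mulVec (x t) i) (Set.Ici 0) t)
    (hx0 : ∀ i, x 0 i ≤ B) :
    ∀ t, 0 ≤ t → ∀ i, x t i ≤ B := by
  by_contra hcon
  push_neg at hcon
  obtain ⟨t₁, ht₁, i₁, hi₁⟩ := hcon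
  set c : ℝ := (B + x t₁ i₁) / 2 with hc
  have hBc : B < c := by simp only [hc]; linarith
  have hct₁ : c ≤ x t₁ i₁ := by simp only [hc]; linarith
  -- continuity of components on `Ici 0`
  have hcont : ∀ i, ContinuousOn (fun t => x t i) (Set.Ici 0) := by
    intro i
    exact (continuous_apply i).comp_continuousOn
      (fun t ht => (hx t ht).continuousWithinAt)
  set S : Set ℝ := ⋃ i : ι, {t | t ∈ Set.Icc 0 t₁ ∧ c ≤ x t i} with hS
  have hSclosed : IsClosed S := by
    apply isClosed_iUnion_of_finite
    intro i
    have : {t | t ∈ Set.Icc 0 t₁ ∧ c ≤ x t i}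
        = Set.Icc 0 t₁ ∩ (fun t => x t i) ⁻¹' (Set.Ici c) := by
      ext t; simp [Set.mem_Ici, and_comm]
    rw [this]
    exact ContinuousOn.preimage_isClosed_of_isClosed
      ((hcont i).mono (fun t ht => ht.1)) isClosed_Icc isClosed_Ici
  have hSne : S.Nonempty := ⟨t₁, Set.mem_iUnion.2 ⟨i₁, ⟨ht₁, le_refl t₁⟩, hct₁⟩⟩
  have hSbdd : BddBelow S := ⟨0, by
    rintro t ht
    obtain ⟨i, hti, -⟩ := Set.mem_iUnion.1 ht
    exact hti.1⟩
  set T : ℝ := sInf S with hT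
  have hTS : T ∈ S := hSclosed.csInf_mem hSne hSbdd
  obtain ⟨i, ⟨hT0, hTt₁⟩, hiT⟩ := Set.mem_iUnion.1 hTS
  -- before T, all components are below c
  have hlt : ∀ t, 0 ≤ t → t < T → ∀ j, x t j < c := by
    intro t ht0 htT j
    by_contra hcj
    push_neg at hcj
    have : t ∈ S := Set.mem_iUnion.2 ⟨j, ⟨ht0, le_of_lt (lt_of_lt_of_le htT hTt₁)⟩, hcj⟩
    exact absurd (csInf_le hSbdd this) (not_le.2 htT)
  have hTpos : 0 < T := by
    rcases lt_or_eq_of_le hT0 with h | h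
    · exact h
    · exfalso; rw [← h] at hiT; exact absurd (lt_of_lt_of_le hBc (hiT.trans (hx0 i))) (lt_irrefl B)
  have hIooNe : (Filter.NeBot (nhdsWithin T (Set.Ioo 0 T))) :=
    right_nhdsWithin_Ioo_neBot hTpos
  have hIooSub : Set.Ioo 0 T ⊆ Set.Ici (0:ℝ) := fun s hs => le_of_lt hs.1
  -- all components at T are ≤ c, by left-continuity
  have hle : ∀ j, x T j ≤ c := by
    intro j
    have htend : Filter.Tendsto (fun t => x t j) (nhdsWithin T (Set.Ioo 0 T)) (nhds (x T j)) :=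
      ((hcont j) T hT0).mono_left (nhdsWithin_mono T hIooSub)
    refine le_of_tendsto htend ?_
    filter_upwards [self_mem_nhdsWithin] with t ht
    exact le_of_lt (hlt t (le_of_lt ht.1) ht.2 j)
  have hxTi : x T i = c := le_antisymm (hle i) hiT
  -- the derivative of component i at T is negative
  have hd := hx T hT0
  have hdi : HasDerivWithinAt (fun t => x t i)
      (f i (x T i) - γ * L.mulVec (x T) i) (Set.Ici 0) T :=
    hasDerivWithinAt_pi.1 hd i
  have hrow_i : ∑ j, L i j = 0 := by
    have := congrFun hLrow i
    simpa [Matrix.mulVec, dotProduct] using this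
  have hLx : 0 ≤ L.mulVec (x T) i := by
    have hsum : L.mulVec (x T) i = ∑ j, L i j * (x T j - c) := by
      simp only [Matrix.mulVec, dotProduct, mul_sub,
        Finset.sum_sub_distrib, ← Finset.sum_mul, hrow_i, zero_mul, sub_zero]
    rw [hsum]
    apply Finset.sum_nonneg
    intro j _
    by_cases hji : j = i
    · rw [hji, hxTi]; simp
    · nlinarith [hLoff i j (Ne.symm hji), hle j]
  have hdneg : f i (x T i) - γ * L.mulVec (x T) i < 0 := by
    have h1 : f i (x T i) < 0 := by rw [hxTi]; exact hfB i c hBc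
    nlinarith [mul_nonneg hγ hLx]
  -- slope argument: just before T, component i exceeds c
  have hslope := (hasDerivWithinAt_iff_tendsto_slope).1 hdi
  have hmono : nhdsWithin T (Set.Ioo 0 T) ≤ nhdsWithin T (Set.Ici 0 \ {T}) := by
    apply nhdsWithin_mono
    intro s hs
    exact ⟨le_of_lt hs.1, ne_of_lt hs.2⟩
  have hslope' : Filter.Tendsto (slope (fun t => x t i) T)
      (nhdsWithin T (Set.Ioo 0 T)) (nhds (f i (x T i) - γ * L.mulVec (x T) i)) :=
    hslope.mono_left hmono
  have hev : ∀ᶠ t in nhdsWithin T (Set.Ioo 0 T),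
      slope (fun t => x t i) T t < 0 := hslope'.eventually_lt_const hdneg
  obtain ⟨t, hts, htIoo⟩ := (hev.and eventually_mem_nhdsWithin).exists
  -- slope < 0 and t < T means x t i > x T i = c
  have hxt : c < x t i := by
    have hdslope : slope (fun t => x t i) T t = (x t i - x T i) / (t - T) :=
      slope_def_field _ _ _
    rw [hdslope, hxTi] at hts
    have htT : t - T < 0 := sub_neg.2 htIoo.2
    rcases div_neg_iff.1 hts with ⟨h1, _⟩ | ⟨_, h2⟩
    · linarith
    · linarith
  exact absurd hxt (not_lt.2 (le_of_lt (hlt t (le_of_lt htIoo.1) htIoo.2 i)))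

/-- Global uniform boundedness, uniformly in the
coupling gain `γ`, of the network `ẋ = F(x) − γ L x` of state strictly semipassive nodes,
where (after relabeling, encoded by the index type `Fin nl ⊕ Fin nf`)
`L = [[Lℓ, 0], [−A, M]]` with `Lℓ` the Laplacian of a strongly connected digraph,
`A ≥ 0` entrywise, and `M` a nonsingular M-matrix. -/
theorem statement3 {nl nf : ℕ} (hnl : 0 < nl)
    (Lℓ : Matrix (Fin nl) (Fin nl) ℝ)
    (A : Matrix (Fin nf) (Fin nl) ℝ)
    (M : Matrix (Fin nf) (Fin nf) ℝ)
    (L : Matrix (Fin nl ⊕ Fin nf) (Fin nl ⊕ Fin nf) ℝ)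
    (hblock : L = Matrix.fromBlocks Lℓ 0 (-A) M)
    (hLℓ : Lℓ.IsLaplacian) (hSC : Lℓ.IsStronglyConnectedDigraph)
    (hA : ∀ i j, 0 ≤ A i j) (hM : M.IsNonsingularMMatrix)
    (hrow : L.mulVec (fun _ => 1) = 0)
    (f : (Fin nl ⊕ Fin nf) → ℝ → ℝ) (hf : ∀ i, Continuous (f i))
    -- state strict semipassivity of every node:
    (V : (Fin nl ⊕ Fin nf) → ℝ → ℝ) (V' : (Fin nl ⊕ Fin nf) → ℝ → ℝ)
    (hV_nonneg : ∀ i s, 0 ≤ V i s)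
    (hV_deriv : ∀ i s, HasDerivAt (V i) (V' i s) s)
    (hV'_cont : ∀ i, Continuous (V' i))
    (α : (Fin nl ⊕ Fin nf) → ℝ → ℝ) (hα : ∀ i, IsClassKInfty (α i))
    (hαV : ∀ i s, α i |s| ≤ V i s)
    (ρ : (Fin nl ⊕ Fin nf) → ℝ) (hρ : ∀ i, 0 < ρ i)
    (H : (Fin nl ⊕ Fin nf) → ℝ → ℝ) (hH : ∀ i, Continuous (H i))
    (ψ : (Fin nl ⊕ Fin nf) → ℝ → ℝ) (hψ_cont : ∀ i, Continuous (ψ i))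
    (hψ_pos : ∀ i s, 0 ≤ s → 0 < ψ i s)
    (hdiss : ∀ i s u, V' i s * (f i s + u) ≤ 2 * u * s - H i s)
    (hHψ : ∀ i s, ρ i ≤ |s| → ψ i |s| ≤ H i s) :
    ∀ r₀ > (0:ℝ), ∀ γ₀ > (0:ℝ), ∃ R ≥ r₀, ∀ γ ≥ γ₀,
      ∀ x : ℝ → ((Fin nl ⊕ Fin nf) → ℝ),
        (∀ t ∈ Set.Ici (0:ℝ),
          HasDerivWithinAt x (fun i => f i (x t i) - γ * L.mulVec (x t) i)
            (Set.Ici 0) t) →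
        euclNorm (x 0) ≤ r₀ →
        ∀ t, (0:ℝ) ≤ t → euclNorm (x t) ≤ R := by
  intro r₀ hr₀ γ₀ hγ₀
  classical
  have hne : Nonempty (Fin nl ⊕ Fin nf) := ⟨Sum.inl ⟨0, hnl⟩⟩
  -- the storage derivative is forced to be `2s`
  have hV' : ∀ i s, V' i s = 2 * s := by
    intro i s
    have key : ∀ u : ℝ, (V' i s - 2 * s) * u ≤ -H i s - V' i s * f i s := by
      intro u
      have h := hdiss i s u
      nlinarith [h]
    have h0 := eq_zero_of_mul_le_forall key
    linarith
  have hineq : ∀ i s, 2 * s * f i s ≤ - H i s := by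
    intro i s
    have h := hdiss i s 0
    rw [hV' i s] at h
    nlinarith [h]
  -- the uniform radius
  set ρbar : ℝ := Finset.univ.sup' (Finset.univ_nonempty) ρ with hρbar
  have hρle : ∀ i, ρ i ≤ ρbar := fun i => Finset.le_sup' ρ (Finset.mem_univ i)
  set B : ℝ := max r₀ ρbar with hB
  have hBr₀ : r₀ ≤ B := le_max_left _ _
  have hBpos : 0 < B := lt_of_lt_of_le hr₀ hBr₀
  have hρB : ∀ i, ρ i ≤ B := fun i => le_trans (hρle i) (le_max_right _ _)
  -- off-diagonal entries of the full L are nonpositive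
  have hLoff : ∀ i j, i ≠ j → L i j ≤ 0 := by
    intro i j hij
    rw [hblock]
    rcases i with i | i <;> rcases j with j | j
    · exact hLℓ.1 i j (by simpa using hij)
    · simp
    · simp [Matrix.fromBlocks]
      exact hA i j
    · exact hM.1 i j (by simpa using hij)
  -- sign of the internal dynamics outside the ball
  have hfneg : ∀ i s, B < s → f i s < 0 := by
    intro i s hs
    have hspos : 0 < s := lt_trans hBpos hs
    have hρs : ρ i ≤ |s| := by
      rw [abs_of_pos hspos]; exact le_trans (hρB i) hs.le
    have h1 := hHψ i s hρs
    have h2 := hψ_pos i |s| (abs_nonneg s)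
    have h3 := hineq i s
    nlinarith
  set g : (Fin nl ⊕ Fin nf) → ℝ → ℝ := fun i s => -(f i (-s)) with hg
  have hgneg : ∀ i s, B < s → g i s < 0 := by
    intro i s hs
    have hspos : 0 < s := lt_of_le_of_lt hBpos.le hs
    have hρs : ρ i ≤ |(-s)| := by
      rw [abs_neg, abs_of_pos hspos]; exact le_trans (hρB i) hs.le
    have h1 := hHψ i (-s) hρs
    have h2 := hψ_pos i |(-s)| (abs_nonneg _)
    have h3 := hineq i (-s)
    simp only [hg]
    nlinarith
  -- componentwise bound on vectors by the euclidean norm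
  have habs_le : ∀ (v : (Fin nl ⊕ Fin nf) → ℝ) i, |v i| ≤ euclNorm v := by
    intro v i
    have h1 : |v i| = Real.sqrt (v i * v i) := by
      rw [← abs_mul_abs_self, Real.sqrt_mul_self (abs_nonneg _)]
    rw [euclNorm, h1]
    apply Real.sqrt_le_sqrt
    exact Finset.single_le_sum (f := fun j => v j * v j)
      (fun j _ => mul_self_nonneg (v j)) (Finset.mem_univ i)
  refine ⟨Real.sqrt (Fintype.card (Fin nl ⊕ Fin nf)) * B + r₀,
    le_add_of_nonneg_left (by positivity), ?_⟩
  intro γ hγ x hx hx0 t ht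
  have hγ0 : 0 ≤ γ := le_trans hγ₀.le hγ
  have habs0 : ∀ i, |x 0 i| ≤ B := fun i => le_trans (habs_le (x 0) i) (le_trans hx0 hBr₀)
  -- upper bound
  have hup := max_principle L hLoff hrow f γ hγ0 B hfneg x hx
    (fun i => le_trans (le_abs_self _) (habs0 i))
  -- lower bound, via the reflected system
  have hy : ∀ t ∈ Set.Ici (0:ℝ), HasDerivWithinAt (fun t => -(x t))
      (fun i => g i ((-(x t)) i) - γ * L.mulVec (-(x t)) i) (Set.Ici 0) t := by
    intro t ht'
    have h1 := (hx t ht').neg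
    refine h1.congr_deriv ?_
    funext i
    simp only [hg, Pi.neg_apply, Matrix.mulVec_neg, neg_neg]
    ring
  have hdown := max_principle L hLoff hrow g γ hγ0 B hgneg (fun t => -(x t)) hy
    (fun i => le_trans (neg_le_abs _) (habs0 i))
  -- assemble
  have habs : ∀ i, |x t i| ≤ B := by
    intro i
    have h1 := hup t ht i
    have h2 := hdown t ht i
    simp only [Pi.neg_apply] at h2
    exact abs_le.2 ⟨by linarith, h1⟩
  have hnorm : euclNorm (x t) ≤ Real.sqrt (Fintype.card (Fin nl ⊕ Fin nf)) * B := by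
    rw [euclNorm]
    have hsum : (x t) ⬝ᵥ (x t) ≤ (Fintype.card (Fin nl ⊕ Fin nf) : ℝ) * (B * B) := by
      rw [dotProduct]
      calc ∑ i, x t i * x t i ≤ ∑ _i : Fin nl ⊕ Fin nf, B * B := by
            apply Finset.sum_le_sum
            intro i _
            have := habs i
            nlinarith [abs_nonneg (x t i), le_abs_self (x t i), neg_abs_le (x t i)]
        _ = (Fintype.card (Fin nl ⊕ Fin nf) : ℝ) * (B * B) := by
            rw [Finset.sum_const, Finset.card_univ, nsmul_eq_mul]
    calc Real.sqrt ((x t) ⬝ᵥ (x t))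
        ≤ Real.sqrt ((Fintype.card (Fin nl ⊕ Fin nf) : ℝ) * (B * B)) := Real.sqrt_le_sqrt hsum
      _ = Real.sqrt (Fintype.card (Fin nl ⊕ Fin nf)) * B := by
          rw [Real.sqrt_mul (by positivity), Real.sqrt_mul_self hBpos.le]
  linarith
end
end

section
/- Let L ∈ ℝ^{n×n} be the Laplacian matrix of a strongly connected weighted digraph. Then the consensus subspace 𝒜 := span(1ₙ) is globally uniformly exponentially stable for the linear system ẋ = −L x: there exist constants C ≥ 1 and λ > 0 such that every differentiable x : [0, ∞) → ℝⁿ satisfying ẋ(t) = −L x(t) for all t ≥ 0 obeys dist(x(t), 𝒜) ≤ C e^{−λ t} dist(x(0), 𝒜) for all t ≥ 0. -/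
open Matrix Filter Set NormedSpace

noncomputable section

/-- Euclidean distance from `y` to the consensus subspace `𝒜 = span(1ₙ)`,
`dist(y, 𝒜) = ‖y − (1ᵀy/n) 1‖`. -/
def distToConsensus {n : ℕ} (y : Fin n → ℝ) : ℝ :=
  euclNorm (fun i => y i - (∑ j, y j) / n)

attribute [local instance] Matrix.linftyOpNormedRing Matrix.linftyOpNormedAlgebra
  Matrix.linftyOpNormedAddCommGroup

namespace Statement6Aux

variable {n : ℕ}

/-- entry evaluation as a continuous linear map -/
def entryCLM (i j : Fin n) : Matrix (Fin n) (Fin n) ℝ →L[ℝ] ℝ :=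
  LinearMap.toContinuousLinearMap
    { toFun := fun A => A i j, map_add' := by intros; rfl, map_smul' := by intros; rfl }

@[simp] lemma entryCLM_apply (i j : Fin n) (A : Matrix (Fin n) (Fin n) ℝ) :
    entryCLM i j A = A i j := rfl

lemma exp_entry_eq_tsum (M : Matrix (Fin n) (Fin n) ℝ) (i j : Fin n) :
    exp M i j = ∑' k : ℕ, ((k.factorial : ℝ))⁻¹ * (M ^ k) i j := by
  rw [exp_eq_tsum ℝ]
  exact ((entryCLM i j).map_tsum (expSeries_summable' M))

lemma summable_exp_entry (M : Matrix (Fin n) (Fin n) ℝ) (i j : Fin n) :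
    Summable fun k : ℕ => ((k.factorial : ℝ))⁻¹ * (M ^ k) i j :=
  ((expSeries_summable' (𝕂 := ℝ) M).map (entryCLM i j) (entryCLM i j).continuous : _)

/-- powers of an entrywise-nonnegative matrix are entrywise nonnegative -/
lemma pow_entry_nonneg {M : Matrix (Fin n) (Fin n) ℝ} (hM : ∀ i j, 0 ≤ M i j) :
    ∀ (k : ℕ) (i j : Fin n), 0 ≤ (M ^ k) i j := by
  intro k
  induction k with
  | zero => intro i j; by_cases h : i = j <;> simp [pow_zero, Matrix.one_apply, h]
  | succ k ih =>
      intro i j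
      rw [pow_succ, Matrix.mul_apply]
      exact Finset.sum_nonneg fun l _ => mul_nonneg (ih i l) (hM l j)

lemma exp_entry_nonneg {M : Matrix (Fin n) (Fin n) ℝ} (hM : ∀ i j, 0 ≤ M i j) (i j : Fin n) :
    0 ≤ exp M i j := by
  rw [exp_entry_eq_tsum]
  exact tsum_nonneg fun k => mul_nonneg (by positivity) (pow_entry_nonneg hM k i j)

lemma exp_entry_pos {M : Matrix (Fin n) (Fin n) ℝ} (hM : ∀ i j, 0 ≤ M i j) {K : ℕ}
    {i j : Fin n} (hK : 0 < (M ^ K) i j) : 0 < exp M i j := by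
  rw [exp_entry_eq_tsum]
  have hterm : 0 < ((K.factorial : ℝ))⁻¹ * (M ^ K) i j :=
    mul_pos (by positivity) hK
  refine lt_of_lt_of_le hterm ?_
  exact Summable.le_tsum (summable_exp_entry M i j) K
    (fun k _ => mul_nonneg (by positivity) (pow_entry_nonneg hM k i j))

/-- scalar matrices exponentiate to scalar matrices -/
lemma exp_smul_one (a : ℝ) :
    exp (a • (1 : Matrix (Fin n) (Fin n) ℝ)) = Real.exp a • (1 : Matrix (Fin n) (Fin n) ℝ) := by
  have h1 : a • (1 : Matrix (Fin n) (Fin n) ℝ) = algebraMap ℝ _ a :=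
    (Algebra.algebraMap_eq_smul_one a).symm
  have h2 : Real.exp a • (1 : Matrix (Fin n) (Fin n) ℝ) = algebraMap ℝ _ (Real.exp a) :=
    (Algebra.algebraMap_eq_smul_one _).symm
  rw [h1, h2, Real.exp_eq_exp_ℝ]
  exact (algebraMap_exp_comm a).symm

end Statement6Aux

namespace Statement6Aux

/-- derivative of `u ↦ exp(u • M) i j` -/
lemma hasDerivAt_exp_entry (M : Matrix (Fin n) (Fin n) ℝ) (i j : Fin n) (u : ℝ) :
    HasDerivAt (fun u : ℝ => exp (u • M) i j) ((exp (u • M) * M) i j) u := by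
  have h := hasDerivAt_exp_smul_const (𝕂 := ℝ) M u
  exact ((entryCLM i j).hasFDerivAt.comp_hasDerivAt u h : _)

/-- solution formula: any solution of `ẋ = -Lx` on `[0,∞)` is `exp(-tL) x(0)`. -/
lemma solution_formula (L : Matrix (Fin n) (Fin n) ℝ) (x : ℝ → Fin n → ℝ)
    (hx : ∀ t ∈ Set.Ici (0:ℝ),
        HasDerivWithinAt x (-(L.mulVec (x t))) (Set.Ici 0) t)
    {t : ℝ} (ht : 0 ≤ t) : x t = (exp (t • (-L))).mulVec (x 0) := by
  set y : ℝ → Fin n → ℝ := fun u => (exp (u • L)).mulVec (x u) with hy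
  have hyderiv : ∀ u ∈ Set.Ici (0:ℝ), HasDerivWithinAt y 0 (Set.Ici 0) u := by
    intro u hu
    rw [hasDerivWithinAt_pi]
    intro i
    have hxj : ∀ j, HasDerivWithinAt (fun v => x v j) ((-(L.mulVec (x u))) j) (Set.Ici 0) u :=
      fun j => (hasDerivWithinAt_pi.1 (hx u hu)) j
    have hterm : ∀ j : Fin n, HasDerivWithinAt
        (fun v => exp (v • L) i j * x v j)
        ((exp (u • L) * L) i j * x u j + exp (u • L) i j * (-(L.mulVec (x u))) j)
        (Set.Ici 0) u := by
      intro j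
      exact ((hasDerivAt_exp_entry L i j u).hasDerivWithinAt).mul (hxj j)
    have hsum := HasDerivWithinAt.fun_sum (u := Finset.univ)
      (A := fun j v => exp (v • L) i j * x v j)
      (A' := fun j => (exp (u • L) * L) i j * x u j
        + exp (u • L) i j * (-(L.mulVec (x u))) j)
      (fun j _ => hterm j)
    have hzero : ∑ j, ((exp (u • L) * L) i j * x u j
        + exp (u • L) i j * (-(L.mulVec (x u))) j) = 0 := by
      rw [Finset.sum_add_distrib]
      have h1 : ∑ j, (exp (u • L) * L) i j * x u j
          = ((exp (u • L) * L).mulVec (x u)) i := by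
        simp [Matrix.mulVec, dotProduct]
      have h2 : ∑ j, exp (u • L) i j * (-(L.mulVec (x u))) j
          = ((exp (u • L)).mulVec (-(L.mulVec (x u)))) i := by
        simp [Matrix.mulVec, dotProduct]
      rw [h1, h2, Matrix.mulVec_neg, Matrix.mulVec_mulVec]
      simp
    have : HasDerivWithinAt (fun v => ∑ j, exp (v • L) i j * x v j)
        (0) (Set.Ici 0) u := hzero ▸ hsum
    have hyi : (fun v => y v i) = fun v => ∑ j, exp (v • L) i j * x v j := by
      funext v
      simp [hy, Matrix.mulVec, dotProduct]
    rw [hyi]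
    exact this
  -- y is constant on [0, t]
  have hconst : y t = y 0 := by
    rcases eq_or_lt_of_le ht with h | h
    · rw [← h]
    · have hcont : ContinuousOn y (Set.Icc 0 t) := by
        intro s hs
        exact ((hyderiv s (Set.mem_Ici.2 hs.1)).continuousWithinAt).mono
          (fun z hz => Set.mem_Ici.2 hz.1)
      have hder : ∀ s ∈ Set.Ico (0:ℝ) t, HasDerivWithinAt y 0 (Set.Ici s) s := by
        intro s hs
        exact (hyderiv s (Set.mem_Ici.2 hs.1)).mono (Set.Ici_subset_Ici.2 hs.1)
      exact constant_of_has_deriv_right_zero hcont hder t (Set.right_mem_Icc.2 ht)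
  have hy0 : y 0 = x 0 := by
    simp [hy]
  have hyt : (exp (t • L)).mulVec (x t) = x 0 := by
    rw [← hy0, ← hconst]
  have hinv : exp (t • (-L)) * exp (t • L) = 1 := by
    rw [← Matrix.exp_add_of_commute]
    · simp
    · exact (((Commute.refl L).neg_left.smul_left t).smul_right t : _)
  calc x t = Matrix.mulVec 1 (x t) := by rw [Matrix.one_mulVec]
    _ = (exp (t • (-L)) * exp (t • L)).mulVec (x t) := by rw [hinv]
    _ = (exp (t • (-L))).mulVec ((exp (t • L)).mulVec (x t)) := by
        rw [Matrix.mulVec_mulVec]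
    _ = (exp (t • (-L))).mulVec (x 0) := by rw [hyt]

end Statement6Aux

namespace Statement6Aux

section osc
variable (hne : (Finset.univ : Finset (Fin n)).Nonempty)

lemma inf'_le_sup' (v : Fin n → ℝ) :
    Finset.univ.inf' hne v ≤ Finset.univ.sup' hne v := by
  obtain ⟨i0, -⟩ := hne
  exact le_trans (Finset.inf'_le v (Finset.mem_univ i0)) (Finset.le_sup' v (Finset.mem_univ i0))

/-- oscillation (max minus min) of a vector -/
def osc (v : Fin n → ℝ) : ℝ :=
  Finset.univ.sup' hne v - Finset.univ.inf' hne v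

lemma osc_nonneg (v : Fin n → ℝ) : 0 ≤ osc hne v :=
  sub_nonneg.2 (inf'_le_sup' hne v)

lemma le_sup' (v : Fin n → ℝ) (i : Fin n) : v i ≤ Finset.univ.sup' hne v :=
  Finset.le_sup' v (Finset.mem_univ i)

lemma inf'_le (v : Fin n → ℝ) (i : Fin n) : Finset.univ.inf' hne v ≤ v i :=
  Finset.inf'_le v (Finset.mem_univ i)

/-- key contraction estimates for a row-stochastic matrix with entries ≥ δ -/
lemma mulVec_le_sup_sub {A : Matrix (Fin n) (Fin n) ℝ} {δ : ℝ} (hδ : 0 ≤ δ)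
    (hA : ∀ i j, δ ≤ A i j) (hrow : ∀ i, ∑ j, A i j = 1) (v : Fin n → ℝ) (i : Fin n) :
    (A.mulVec v) i ≤ Finset.univ.sup' hne v - δ * osc hne v := by
  obtain ⟨k0, -, hk0⟩ := Finset.exists_mem_eq_inf' hne v
  set m := Finset.univ.inf' hne v with hm
  set Mx := Finset.univ.sup' hne v with hMx
  have hAnn : ∀ j : Fin n, 0 ≤ A i j := fun j => le_trans hδ (hA i j)
  have hsplit : (A.mulVec v) i
      = A i k0 * v k0 + ∑ j ∈ Finset.univ.erase k0, A i j * v j := by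
    simp only [Matrix.mulVec, dotProduct]
    rw [← Finset.add_sum_erase _ _ (Finset.mem_univ k0)]
  have hrowsplit : A i k0 + ∑ j ∈ Finset.univ.erase k0, A i j = 1 := by
    rw [Finset.add_sum_erase _ (fun j => A i j) (Finset.mem_univ k0)]
    exact hrow i
  have hbound : ∑ j ∈ Finset.univ.erase k0, A i j * v j
      ≤ (1 - A i k0) * Mx := by
    have h1 : ∑ j ∈ Finset.univ.erase k0, A i j * v j
        ≤ ∑ j ∈ Finset.univ.erase k0, A i j * Mx := by
      refine Finset.sum_le_sum fun j _ => ?_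
      exact mul_le_mul_of_nonneg_left (le_sup' hne v j) (hAnn j)
    have h2 : ∑ j ∈ Finset.univ.erase k0, A i j * Mx = (1 - A i k0) * Mx := by
      rw [← Finset.sum_mul]
      congr 1
      linarith
    linarith
  have hvk0 : v k0 = m := hk0.symm
  have hmM : m ≤ Mx := inf'_le_sup' hne v
  have hδA : δ ≤ A i k0 := hA i k0
  have hosc : osc hne v = Mx - m := rfl
  nlinarith [hsplit, hbound]

lemma mulVec_ge_inf_add {A : Matrix (Fin n) (Fin n) ℝ} {δ : ℝ} (hδ : 0 ≤ δ)
    (hA : ∀ i j, δ ≤ A i j) (hrow : ∀ i, ∑ j, A i j = 1) (v : Fin n → ℝ) (i : Fin n) :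
    Finset.univ.inf' hne v + δ * osc hne v ≤ (A.mulVec v) i := by
  obtain ⟨k0, -, hk0⟩ := Finset.exists_mem_eq_sup' hne v
  set m := Finset.univ.inf' hne v with hm
  set Mx := Finset.univ.sup' hne v with hMx
  have hAnn : ∀ j : Fin n, 0 ≤ A i j := fun j => le_trans hδ (hA i j)
  have hsplit : (A.mulVec v) i
      = A i k0 * v k0 + ∑ j ∈ Finset.univ.erase k0, A i j * v j := by
    simp only [Matrix.mulVec, dotProduct]
    rw [← Finset.add_sum_erase _ _ (Finset.mem_univ k0)]
  have hrowsplit : A i k0 + ∑ j ∈ Finset.univ.erase k0, A i j = 1 := by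
    rw [Finset.add_sum_erase _ (fun j => A i j) (Finset.mem_univ k0)]
    exact hrow i
  have hbound : (1 - A i k0) * m
      ≤ ∑ j ∈ Finset.univ.erase k0, A i j * v j := by
    have h1 : ∑ j ∈ Finset.univ.erase k0, A i j * m
        ≤ ∑ j ∈ Finset.univ.erase k0, A i j * v j := by
      refine Finset.sum_le_sum fun j _ => ?_
      exact mul_le_mul_of_nonneg_left (inf'_le hne v j) (hAnn j)
    have h2 : ∑ j ∈ Finset.univ.erase k0, A i j * m = (1 - A i k0) * m := by
      rw [← Finset.sum_mul]
      congr 1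
      linarith
    linarith
  have hvk0 : v k0 = Mx := hk0.symm
  have hmM : m ≤ Mx := inf'_le_sup' hne v
  have hδA : δ ≤ A i k0 := hA i k0
  have hosc : osc hne v = Mx - m := rfl
  nlinarith [hsplit, hbound]

lemma osc_mulVec_le {A : Matrix (Fin n) (Fin n) ℝ} {δ : ℝ} (hδ : 0 ≤ δ)
    (hA : ∀ i j, δ ≤ A i j) (hrow : ∀ i, ∑ j, A i j = 1) (v : Fin n → ℝ) :
    osc hne (A.mulVec v) ≤ (1 - 2 * δ) * osc hne v := by
  have hsup : Finset.univ.sup' hne (A.mulVec v)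
      ≤ Finset.univ.sup' hne v - δ * osc hne v :=
    Finset.sup'_le hne _ fun i _ => mulVec_le_sup_sub hne hδ hA hrow v i
  have hinf : Finset.univ.inf' hne v + δ * osc hne v
      ≤ Finset.univ.inf' hne (A.mulVec v) :=
    Finset.le_inf' hne _ fun i _ => mulVec_ge_inf_add hne hδ hA hrow v i
  have : osc hne (A.mulVec v)
      = Finset.univ.sup' hne (A.mulVec v) - Finset.univ.inf' hne (A.mulVec v) := rfl
  have hosc : osc hne v = Finset.univ.sup' hne v - Finset.univ.inf' hne v := rfl
  linarith

end osc
end Statement6Aux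

namespace Statement6Aux
section dist
variable (hn : 0 < n)

lemma dist_eq_sqrt (y : Fin n → ℝ) :
    distToConsensus y = Real.sqrt (∑ i, (y i - (∑ j, y j) / n) ^ 2) := by
  simp only [distToConsensus, euclNorm, dotProduct]
  congr 1
  refine Finset.sum_congr rfl fun i _ => (sq _).symm

lemma dist_nonneg' (y : Fin n → ℝ) : 0 ≤ distToConsensus y :=
  Real.sqrt_nonneg _

lemma abs_sub_avg_le_dist (y : Fin n → ℝ) (i : Fin n) :
    |y i - (∑ j, y j) / n| ≤ distToConsensus y := by
  rw [dist_eq_sqrt]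
  have h1 : (y i - (∑ j, y j) / n) ^ 2 ≤ ∑ k, (y k - (∑ j, y j) / n) ^ 2 :=
    Finset.single_le_sum (f := fun k => (y k - (∑ j, y j) / n) ^ 2)
      (fun k _ => sq_nonneg _) (Finset.mem_univ i)
  calc |y i - (∑ j, y j) / n| = Real.sqrt ((y i - (∑ j, y j) / n) ^ 2) :=
        (Real.sqrt_sq_eq_abs _).symm
    _ ≤ _ := Real.sqrt_le_sqrt h1

lemma avg_mem_Icc (hne : (Finset.univ : Finset (Fin n)).Nonempty) (y : Fin n → ℝ) :
    Finset.univ.inf' hne y ≤ (∑ j, y j) / n ∧ (∑ j, y j) / n ≤ Finset.univ.sup' hne y := by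
  have hn' : (0:ℝ) < n := by
    have := Finset.card_pos.2 hne
    exact Nat.cast_pos.2 (by simpa using this)
  constructor
  · rw [le_div_iff₀ hn']
    calc Finset.univ.inf' hne y * n = ∑ _j : Fin n, Finset.univ.inf' hne y := by
          simp [mul_comm]
      _ ≤ ∑ j, y j := Finset.sum_le_sum fun j _ => inf'_le hne y j
  · rw [div_le_iff₀ hn']
    calc ∑ j, y j ≤ ∑ _j : Fin n, Finset.univ.sup' hne y :=
          Finset.sum_le_sum fun j _ => le_sup' hne y j
      _ = Finset.univ.sup' hne y * n := by simp [mul_comm]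

lemma dist_le_sqrt_mul_osc (hne : (Finset.univ : Finset (Fin n)).Nonempty) (y : Fin n → ℝ) :
    distToConsensus y ≤ Real.sqrt n * osc hne y := by
  obtain ⟨havg1, havg2⟩ := avg_mem_Icc hne y
  have habs : ∀ i, |y i - (∑ j, y j) / n| ≤ osc hne y := by
    intro i
    rw [abs_le]
    constructor
    · have := inf'_le hne y i
      have := osc_nonneg hne y
      simp only [osc] at *
      linarith
    · have := le_sup' hne y i
      simp only [osc] at *
      linarith
  rw [dist_eq_sqrt]
  have hsum : ∑ i, (y i - (∑ j, y j) / n) ^ 2 ≤ ∑ _i : Fin n, (osc hne y) ^ 2 := by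
    refine Finset.sum_le_sum fun i _ => ?_
    have := habs i
    calc (y i - (∑ j, y j) / n) ^ 2 = |y i - (∑ j, y j) / n| ^ 2 := (sq_abs _).symm
      _ ≤ (osc hne y) ^ 2 := by
          exact pow_le_pow_left₀ (abs_nonneg _) this 2
  calc Real.sqrt (∑ i, (y i - (∑ j, y j) / n) ^ 2)
      ≤ Real.sqrt (∑ _i : Fin n, (osc hne y) ^ 2) := Real.sqrt_le_sqrt hsum
    _ = Real.sqrt (n * (osc hne y) ^ 2) := by simp [Finset.sum_const, mul_comm]
    _ = Real.sqrt n * osc hne y := by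
        rw [Real.sqrt_mul (by positivity), Real.sqrt_sq (osc_nonneg hne y)]

lemma osc_le_two_mul_dist (hne : (Finset.univ : Finset (Fin n)).Nonempty) (y : Fin n → ℝ) :
    osc hne y ≤ 2 * distToConsensus y := by
  obtain ⟨imax, -, hmax⟩ := Finset.exists_mem_eq_sup' hne y
  obtain ⟨imin, -, hmin⟩ := Finset.exists_mem_eq_inf' hne y
  have h1 := abs_sub_avg_le_dist y imax
  have h2 := abs_sub_avg_le_dist y imin
  have ha1 : y imax - (∑ j, y j) / n ≤ |y imax - (∑ j, y j) / n| := le_abs_self _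
  have ha2 : (∑ j, y j) / n - y imin ≤ |y imin - (∑ j, y j) / n| := by
    rw [abs_sub_comm]; exact le_abs_self _
  have : osc hne y = y imax - y imin := by rw [osc, ← hmax, ← hmin]
  linarith

end dist
end Statement6Aux

namespace Statement6Aux
section perron
variable {B : Matrix (Fin n) (Fin n) ℝ}

lemma pow_diag_ge_one (hB : ∀ i j, 0 ≤ B i j) (hdiag : ∀ i, 1 ≤ B i i) :
    ∀ (k : ℕ) (i : Fin n), 1 ≤ (B ^ k) i i := by
  intro k
  induction k with
  | zero => intro i; simp
  | succ k ih =>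
      intro i
      rw [pow_succ, Matrix.mul_apply]
      calc (1:ℝ) = 1 * 1 := (one_mul 1).symm
        _ ≤ (B ^ k) i i * B i i := mul_le_mul (ih i) (hdiag i) zero_le_one
            (le_trans zero_le_one (ih i))
        _ ≤ ∑ l, (B ^ k) i l * B l i := by
            refine Finset.single_le_sum (f := fun l => (B ^ k) i l * B l i)
              (fun l _ => mul_nonneg (pow_entry_nonneg hB k i l) (hB l i))
              (Finset.mem_univ i)

lemma pow_entry_pos_mono (hB : ∀ i j, 0 ≤ B i j) (hdiag : ∀ i, 1 ≤ B i i)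
    {m : ℕ} {i j : Fin n} (h : 0 < (B ^ m) i j) {k : ℕ} (hk : m ≤ k) :
    0 < (B ^ k) i j := by
  obtain ⟨a, rfl⟩ := Nat.exists_eq_add_of_le hk
  rw [add_comm, pow_add, Matrix.mul_apply]
  have hterm : 0 < (B ^ a) i i * (B ^ m) i j :=
    mul_pos (lt_of_lt_of_le zero_lt_one (pow_diag_ge_one hB hdiag a i)) h
  calc (0:ℝ) < (B ^ a) i i * (B ^ m) i j := hterm
    _ ≤ ∑ l, (B ^ a) i l * (B ^ m) l j :=
        Finset.single_le_sum (f := fun l => (B ^ a) i l * (B ^ m) l j)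
          (fun l _ => mul_nonneg (pow_entry_nonneg hB a i l) (pow_entry_nonneg hB m l j))
          (Finset.mem_univ i)

lemma transGen_pow_pos {L : Matrix (Fin n) (Fin n) ℝ}
    (hB : ∀ i j, 0 ≤ B i j) (hedge : ∀ a b, L.digraphEdge a b → 0 < B b a)
    {i j : Fin n} (h : Relation.TransGen L.digraphEdge i j) :
    ∃ m : ℕ, 0 < (B ^ m) j i := by
  induction h with
  | single hedge1 =>
      exact ⟨1, by simpa [pow_one] using hedge _ _ hedge1⟩
  | tail hab hbc ih =>
      obtain ⟨m, hm⟩ := ih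
      rename_i b c
      refine ⟨m + 1, ?_⟩
      rw [pow_succ', Matrix.mul_apply]
      have hterm : 0 < B c b * (B ^ m) b i := mul_pos (hedge _ _ hbc) hm
      calc (0:ℝ) < B c b * (B ^ m) b i := hterm
        _ ≤ ∑ l, B c l * (B ^ m) l i :=
            Finset.single_le_sum (f := fun l => B c l * (B ^ m) l i)
              (fun l _ => mul_nonneg (hB c l) (pow_entry_nonneg hB m l i))
              (Finset.mem_univ b)

/-- uniform power with all entries positive -/
lemma exists_uniform_pow_pos {L : Matrix (Fin n) (Fin n) ℝ}
    (hB : ∀ i j, 0 ≤ B i j) (hdiag : ∀ i, 1 ≤ B i i)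
    (hedge : ∀ a b, L.digraphEdge a b → 0 < B b a)
    (hSC : L.IsStronglyConnectedDigraph) :
    ∃ K : ℕ, ∀ i j : Fin n, 0 < (B ^ K) i j := by
  have hpair : ∀ p : Fin n × Fin n, ∃ m : ℕ, 0 < (B ^ m) p.1 p.2 := by
    rintro ⟨i, j⟩
    by_cases h : j = i
    · subst h
      exact ⟨0, by simp⟩
    · obtain ⟨m, hm⟩ := transGen_pow_pos hB hedge (hSC j i h)
      exact ⟨m, hm⟩
  choose f hf using hpair
  refine ⟨Finset.univ.sup f, fun i j => ?_⟩
  exact pow_entry_pos_mono hB hdiag (hf (i, j))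
    (Finset.le_sup (Finset.mem_univ (i, j)))

end perron
end Statement6Aux

open Statement6Aux in
/-- For the Laplacian `L` of a strongly connected weighted digraph, the
consensus subspace is globally uniformly exponentially stable for `ẋ = −L x`. -/
theorem statement6 {n : ℕ} (L : Matrix (Fin n) (Fin n) ℝ)
    (hLap : L.IsLaplacian) (hSC : L.IsStronglyConnectedDigraph) :
    ∃ C ≥ (1:ℝ), ∃ lam > (0:ℝ), ∀ x : ℝ → (Fin n → ℝ),
      (∀ t ∈ Set.Ici (0:ℝ),
        HasDerivWithinAt x (-(L.mulVec (x t))) (Set.Ici 0) t) →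
      ∀ t, (0:ℝ) ≤ t →
        distToConsensus (x t) ≤ C * Real.exp (-lam * t) * distToConsensus (x 0) := by
  rcases Nat.eq_zero_or_pos n with hn | hn
  · -- trivial case n = 0
    subst hn
    refine ⟨1, le_refl _, 1, one_pos, fun x _ t ht => ?_⟩
    have hz : ∀ y : Fin 0 → ℝ, distToConsensus y = 0 := by
      intro y
      simp [distToConsensus, euclNorm, dotProduct]
    rw [hz, hz]
    positivity
  -- main case n ≥ 1
  have : NeZero n := ⟨hn.ne'⟩
  have hne : (Finset.univ : Finset (Fin n)).Nonempty := Finset.univ_nonempty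
  -- the comparison matrix B = c I - L
  set c : ℝ := 1 + ∑ i, |L i i| with hc
  set B : Matrix (Fin n) (Fin n) ℝ := c • 1 - L with hB
  have hBapp : ∀ i j, B i j = c • (1 : Matrix (Fin n) (Fin n) ℝ) i j - L i j := by
    intro i j; rfl
  have hdiag : ∀ i, 1 ≤ B i i := by
    intro i
    have h1 : L i i ≤ |L i i| := le_abs_self _
    have h2 : |L i i| ≤ ∑ k, |L k k| :=
      Finset.single_le_sum (f := fun k => |L k k|) (fun k _ => abs_nonneg _)
        (Finset.mem_univ i)
    have : B i i = c - L i i := by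
      rw [hBapp]; simp [Matrix.one_apply]
    rw [this, hc]; linarith
  have hBnn : ∀ i j, 0 ≤ B i j := by
    intro i j
    by_cases h : i = j
    · subst h; linarith [hdiag i]
    · have : B i j = -L i j := by
        rw [hBapp]; simp [Matrix.one_apply, h]
      rw [this]
      linarith [hLap.1 i j h]
  have hedge : ∀ a b, L.digraphEdge a b → 0 < B b a := by
    rintro a b ⟨hab, hLba⟩
    have : B b a = -L b a := by
      rw [hBapp]; simp [Matrix.one_apply, (Ne.symm hab : b ≠ a)]
    rw [this]; linarith
  obtain ⟨K, hK⟩ := exists_uniform_pow_pos hBnn hdiag hedge hSC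
  -- the flow matrices
  set E : ℝ → Matrix (Fin n) (Fin n) ℝ := fun u => NormedSpace.exp (u • (-L)) with hEdef
  have hdecomp : ∀ u : ℝ, E u = Real.exp (-(u * c)) • NormedSpace.exp (u • B) := by
    intro u
    have hsplit : u • (-L) = u • B + (-(u * c)) • (1 : Matrix (Fin n) (Fin n) ℝ) := by
      rw [hB]
      module
    have hcomm : Commute (u • B) ((-(u * c)) • (1 : Matrix (Fin n) (Fin n) ℝ)) :=
      ((Commute.one_right (u • B)).smul_right _)
    rw [hEdef]
    simp only []
    rw [hsplit, Matrix.exp_add_of_commute _ _ hcomm, exp_smul_one, mul_smul_comm, mul_one]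
  -- entrywise nonnegativity and row sums of the flow
  have hEnn : ∀ u : ℝ, 0 ≤ u → ∀ i j, 0 ≤ E u i j := by
    intro u hu i j
    rw [hdecomp u]
    have huB : ∀ i j, 0 ≤ (u • B) i j := by
      intro i j
      have : (u • B) i j = u * B i j := rfl
      rw [this]
      exact mul_nonneg hu (hBnn i j)
    have := exp_entry_nonneg huB i j
    simpa [Matrix.smul_apply] using mul_nonneg (Real.exp_nonneg _) this
  have hrowE : ∀ u : ℝ, 0 ≤ u → ∀ i, ∑ j, E u i j = 1 := by
    intro u hu i
    have hone : (fun _ => (1:ℝ)) = (E u).mulVec (fun _ => 1) := by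
      have hconst : ∀ s ∈ Set.Ici (0:ℝ), HasDerivWithinAt (fun _ : ℝ => (fun _ : Fin n => (1:ℝ)))
          (-(L.mulVec ((fun _ : ℝ => (fun _ : Fin n => (1:ℝ))) s))) (Set.Ici 0) s := by
        intro s _
        have hz : -(L.mulVec (fun _ : Fin n => (1:ℝ))) = 0 := by rw [hLap.2, neg_zero]
        rw [hz]
        exact hasDerivWithinAt_const s _ _
      exact solution_formula L (fun _ => fun _ => 1) hconst (le_refl (0:ℝ)) ▸
        solution_formula L (fun _ => fun _ => 1) hconst hu
    have := congrFun hone i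
    simpa [Matrix.mulVec, dotProduct] using this.symm
  -- the one-second flow matrix and its entrywise positivity
  set A : Matrix (Fin n) (Fin n) ℝ := E 1 with hAdef
  have hApos : ∀ i j, 0 < A i j := by
    intro i j
    rw [hAdef, hdecomp 1, one_smul]
    have : (0:ℝ) < NormedSpace.exp B i j := exp_entry_pos hBnn (hK i j)
    simpa [Matrix.smul_apply] using mul_pos (Real.exp_pos _) this
  have hrowA : ∀ i, ∑ j, A i j = 1 := hrowE 1 zero_le_one
  -- uniform entry lower bound
  have hnep : (Finset.univ : Finset (Fin n × Fin n)).Nonempty := Finset.univ_nonempty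
  set δ0 : ℝ := Finset.univ.inf' hnep (fun p : Fin n × Fin n => A p.1 p.2) with hδ0
  have hδ0pos : 0 < δ0 := by
    obtain ⟨p, -, hp⟩ := Finset.exists_mem_eq_inf' hnep (fun p : Fin n × Fin n => A p.1 p.2)
    rw [hδ0, hp]
    exact hApos p.1 p.2
  have hδ0le : ∀ i j, δ0 ≤ A i j := fun i j =>
    Finset.inf'_le (fun p : Fin n × Fin n => A p.1 p.2) (Finset.mem_univ (i, j))
  set d : ℝ := min δ0 (1/2) with hd
  have hdpos : 0 < d := lt_min hδ0pos (by norm_num)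
  have hdhalf : d ≤ 1/2 := min_le_right _ _
  set δ : ℝ := d / 2 with hδ
  have hδnn : 0 ≤ δ := by positivity
  have hδle : ∀ i j, δ ≤ A i j := by
    intro i j
    have h1 : δ ≤ δ0 := by
      rw [hδ]
      have : d ≤ δ0 := min_le_left _ _
      linarith
    exact le_trans h1 (hδ0le i j)
  set q : ℝ := 1 - 2 * δ with hq
  have hq0 : 0 < q := by rw [hq, hδ]; linarith
  have hq1 : q < 1 := by rw [hq, hδ]; linarith
  -- iterated contraction
  have hosck : ∀ (k : ℕ) (v : Fin n → ℝ),
      osc hne ((A ^ k).mulVec v) ≤ q ^ k * osc hne v := by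
    intro k
    induction k with
    | zero => intro v; simp [Matrix.one_mulVec]
    | succ k ih =>
        intro v
        calc osc hne ((A ^ (k+1)).mulVec v)
            = osc hne (A.mulVec ((A ^ k).mulVec v)) := by
              rw [pow_succ', ← Matrix.mulVec_mulVec]
          _ ≤ q * osc hne ((A ^ k).mulVec v) :=
              osc_mulVec_le hne hδnn hδle hrowA _
          _ ≤ q * (q ^ k * osc hne v) :=
              mul_le_mul_of_nonneg_left (ih v) hq0.le
          _ = q ^ (k+1) * osc hne v := by ring
  -- the constants
  set lam : ℝ := -Real.log q with hlamdef
  have hlam : 0 < lam := by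
    rw [hlamdef]
    exact neg_pos.2 (Real.log_neg hq0 hq1)
  set C : ℝ := 1 + 2 * Real.sqrt n * Real.exp lam with hC
  have hC1 : (1:ℝ) ≤ C := by
    rw [hC]
    have : 0 ≤ 2 * Real.sqrt n * Real.exp lam := by positivity
    linarith
  refine ⟨C, hC1, lam, hlam, fun x hx t ht => ?_⟩
  -- solution decomposition
  set k : ℕ := ⌊t⌋₊ with hk
  set r : ℝ := t - k with hr
  have hr0 : 0 ≤ r := by
    rw [hr]
    have := Nat.floor_le ht
    linarith
  have hEt : E t = E r * A ^ k := by
    have h1 : t • (-L) = r • (-L) + (k:ℝ) • (-L) := by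
      rw [← add_smul]
      congr 1
      rw [hr]; ring
    have hcomm : Commute (r • (-L)) ((k:ℝ) • (-L)) :=
      (((Commute.refl (-L)).smul_left r).smul_right (k:ℝ))
    have h2 : NormedSpace.exp ((k:ℝ) • (-L)) = A ^ k := by
      rw [Nat.cast_smul_eq_nsmul ℝ k (-L), Matrix.exp_nsmul]
      congr 1
      rw [hAdef, hEdef]
      simp only []
      rw [one_smul]
    rw [hEdef]
    simp only []
    rw [h1, Matrix.exp_add_of_commute _ _ hcomm, h2]
  have hsol : x t = (E r).mulVec ((A ^ k).mulVec (x 0)) := by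
    have := solution_formula L x hx ht
    rw [Matrix.mulVec_mulVec, ← hEt]
    exact this
  set w : Fin n → ℝ := (A ^ k).mulVec (x 0) with hw
  -- oscillation estimates
  have hoscxt : osc hne (x t) ≤ osc hne w := by
    rw [hsol]
    have := osc_mulVec_le hne (le_refl (0:ℝ)) (fun i j => hEnn r hr0 i j) (hrowE r hr0) w
    simpa using this
  have hoscw : osc hne w ≤ q ^ k * osc hne (x 0) := hosck k (x 0)
  have hosc0 : osc hne (x 0) ≤ 2 * distToConsensus (x 0) := osc_le_two_mul_dist hne (x 0)
  -- exponential bound on q ^ k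
  have htk : t - 1 ≤ (k:ℝ) := by
    have := Nat.lt_floor_add_one t
    rw [hk]
    push_cast at this ⊢
    linarith
  have hqk : q ^ k ≤ Real.exp lam * Real.exp (-lam * t) := by
    have h1 : q ^ k = q ^ ((k:ℕ):ℝ) := (Real.rpow_natCast q k).symm
    have h2 : q ^ ((k:ℕ):ℝ) ≤ q ^ (t - 1) :=
      Real.rpow_le_rpow_of_exponent_ge hq0 hq1.le htk
    have h3 : q ^ (t - 1) = Real.exp (Real.log q * (t - 1)) := Real.rpow_def_of_pos hq0 _
    have h4 : Real.log q * (t - 1) = lam + -lam * t := by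
      have : Real.log q = -lam := by rw [hlamdef]; ring
      rw [this]; ring
    rw [h1]
    calc q ^ ((k:ℕ):ℝ) ≤ q ^ (t - 1) := h2
      _ = Real.exp (lam + -lam * t) := by rw [h3, h4]
      _ = Real.exp lam * Real.exp (-lam * t) := Real.exp_add _ _
  -- final chain
  have hqknn : 0 ≤ q ^ k := pow_nonneg hq0.le k
  have hd0 : 0 ≤ distToConsensus (x 0) := dist_nonneg' (x 0)
  have hchain1 : distToConsensus (x t) ≤ Real.sqrt n * osc hne (x t) :=
    dist_le_sqrt_mul_osc hne (x t)
  have hchain2 : osc hne (x t) ≤ q ^ k * (2 * distToConsensus (x 0)) := by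
    calc osc hne (x t) ≤ osc hne w := hoscxt
      _ ≤ q ^ k * osc hne (x 0) := hoscw
      _ ≤ q ^ k * (2 * distToConsensus (x 0)) :=
          mul_le_mul_of_nonneg_left hosc0 hqknn
  have hchain3 : distToConsensus (x t)
      ≤ Real.sqrt n * (q ^ k * (2 * distToConsensus (x 0))) :=
    le_trans hchain1 (mul_le_mul_of_nonneg_left hchain2 (Real.sqrt_nonneg _))
  have hchain4 : Real.sqrt n * (q ^ k * (2 * distToConsensus (x 0)))
      ≤ Real.sqrt n * ((Real.exp lam * Real.exp (-lam * t)) * (2 * distToConsensus (x 0))) := by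
    refine mul_le_mul_of_nonneg_left ?_ (Real.sqrt_nonneg _)
    exact mul_le_mul_of_nonneg_right hqk (by linarith)
  have hchain5 : Real.sqrt n * ((Real.exp lam * Real.exp (-lam * t)) * (2 * distToConsensus (x 0)))
      ≤ C * Real.exp (-lam * t) * distToConsensus (x 0) := by
    have heq : Real.sqrt n * ((Real.exp lam * Real.exp (-lam * t)) * (2 * distToConsensus (x 0)))
        = (2 * Real.sqrt n * Real.exp lam) * Real.exp (-lam * t) * distToConsensus (x 0) := by
      ring
    rw [heq]
    have hCge : 2 * Real.sqrt n * Real.exp lam ≤ C := by rw [hC]; linarith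
    have hexp : 0 ≤ Real.exp (-lam * t) := Real.exp_nonneg _
    exact mul_le_mul_of_nonneg_right
      (mul_le_mul_of_nonneg_right hCge hexp) hd0
  linarith
end
end

section
/- Let L ∈ ℝ^{n×n} be the Laplacian matrix of a strongly connected weighted digraph, let v ∈ ℝⁿ be the left eigenvector of L for the eigenvalue 0 with strictly positive entries normalized so vᵀ1ₙ = 1, set V := diag(v) and Q := V L + Lᵀ V. For each i ∈ {1,…,n}, let fᵢ : ℝ → ℝ be continuous and let Vᵢ : ℝ → ℝ≥0 be a C¹ storage function, ρᵢ > 0 a constant, Hᵢ : ℝ → ℝ continuous and ψᵢ : ℝ≥0 → ℝ>0 continuous, satisfying Vᵢ′(s)(fᵢ(s) + u) ≤ 2us − Hᵢ(s) for all s, u ∈ ℝ and Hᵢ(s) ≥ ψᵢ(|s|) for all |s| ≥ ρᵢ. Define W(x) := Σᵢ vᵢ Vᵢ(xᵢ) and H_ℓ := Σᵢ max{vᵢ · max_{|s| ≤ ρᵢ}(−Hᵢ(s)), 0}. Then for every γ > 0 and every x ∈ ℝⁿ, the derivative of W along the vector field x ↦ F(x) − γ L x (where F(x)ᵢ = fᵢ(xᵢ))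 satisfies Σᵢ vᵢ Vᵢ′(xᵢ)(fᵢ(xᵢ) − γ (L x)ᵢ) ≤ H_ℓ − γ λ₂(Q) · dist(x, 𝒜)², where 𝒜 := span(1ₙ) and λ₂(Q) is the second smallest eigenvalue of Q. -/
open Matrix Filter Set

noncomputable section

/-- The eigenvalues of `Q` (roots of its characteristic polynomial, counted with
multiplicity) sorted increasingly. -/
def sortedEigenvalues {n : ℕ} (Q : Matrix (Fin n) (Fin n) ℝ) : List ℝ :=
  Q.charpoly.roots.sort (· ≤ ·)

/-- The `k`-th smallest eigenvalue of `Q` (`k = 0` is the smallest, `k = 1` the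
second smallest). -/
def eigval {n : ℕ} (Q : Matrix (Fin n) (Fin n) ℝ) (k : ℕ) : ℝ :=
  (sortedEigenvalues Q).getD k 0

section AuxSpectral
open Polynomial

lemma charpoly_conj_aux {m : Type*} [Fintype m] [DecidableEq m]
    (P Pi M : Matrix m m ℝ) (h1 : P * Pi = 1) :
    (P * M * Pi).charpoly = M.charpoly := by
  have hmap1 : P.map C * Pi.map C = 1 := by
    rw [← Matrix.map_mul, h1, Matrix.map_one _ (map_zero C) (map_one C)]
  have hscalar : (Matrix.scalar m (X : ℝ[X])) = (X : ℝ[X]) • (1 : Matrix m m ℝ[X]) := by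
    ext i j
    by_cases h : i = j <;> simp [Matrix.scalar_apply, Matrix.diagonal_apply, h, Matrix.one_apply]
  have key : charmatrix (P * M * Pi) = P.map C * charmatrix M * Pi.map C := by
    unfold charmatrix
    rw [Matrix.mul_sub, Matrix.sub_mul]
    congr 1
    · rw [hscalar, mul_smul_comm, smul_mul_assoc, mul_one, ← Matrix.map_mul, h1,
        Matrix.map_one _ (map_zero C) (map_one C)]
    · simp only [RingHom.mapMatrix_apply]
      rw [Matrix.map_mul, Matrix.map_mul]
  rw [Matrix.charpoly, Matrix.charpoly, key, Matrix.det_mul, Matrix.det_mul]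
  have : (P.map C).det * (Pi.map C).det = 1 := by
    rw [← Matrix.det_mul, hmap1, Matrix.det_one]
  calc (P.map C).det * (charmatrix M).det * (Pi.map C).det
      = (P.map C).det * (Pi.map C).det * (charmatrix M).det := by ring
    _ = (charmatrix M).det := by rw [this, one_mul]

lemma charpoly_roots_eigen {n : ℕ} (Q : Matrix (Fin n) (Fin n) ℝ) (hQ : Q.IsHermitian) :
    Q.charpoly.roots = Finset.univ.val.map hQ.eigenvalues := by
  have hmem := (hQ.eigenvectorUnitary).2
  rw [Unitary.mem_iff] at hmem
  have hst := hQ.spectral_theorem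
  rw [Unitary.conjStarAlgAut_apply] at hst
  have hD : (Matrix.diagonal (RCLike.ofReal ∘ hQ.eigenvalues) : Matrix (Fin n) (Fin n) ℝ)
      = Matrix.diagonal hQ.eigenvalues := by
    rw [RCLike.ofReal_real_eq_id, Function.id_comp]
  rw [hD] at hst
  conv_lhs => rw [hst]
  rw [charpoly_conj_aux _ _ _ (by exact_mod_cast hmem.2)]
  have hcm : charmatrix (Matrix.diagonal hQ.eigenvalues)
      = Matrix.diagonal (fun k => (X : ℝ[X]) - C (hQ.eigenvalues k)) := by
    ext i j
    by_cases h : i = j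
    · subst h; simp
    · simp [h, Matrix.diagonal_apply_ne _ h]
  rw [Matrix.charpoly, hcm, Matrix.det_diagonal]
  rw [Finset.prod_eq_multiset_prod]
  rw [show (Finset.univ.val.map fun k => (X:ℝ[X]) - C (hQ.eigenvalues k))
      = ((Finset.univ.val.map hQ.eigenvalues).map fun a => (X:ℝ[X]) - C a) by
    rw [Multiset.map_map]; rfl]
  exact roots_multiset_prod_X_sub_C _

lemma quad_lower_bound {n : ℕ} (Q : Matrix (Fin n) (Fin n) ℝ) (hQ : Q.IsHermitian)
    (hpsd : ∀ w : Fin n → ℝ, 0 ≤ w ⬝ᵥ Q.mulVec w)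
    (o : Fin n → ℝ) (ho : Q.mulVec o = 0) (ho_ne : o ≠ 0)
    (y : Fin n → ℝ) (hyo : y ⬝ᵥ o = 0) :
    eigval Q 1 * (y ⬝ᵥ y) ≤ y ⬝ᵥ Q.mulVec y := by
  classical
  set σ := hQ.eigenvalues with hσ
  set Um : Matrix (Fin n) (Fin n) ℝ := (hQ.eigenvectorUnitary : Matrix (Fin n) (Fin n) ℝ) with hUm
  have hmem := (hQ.eigenvectorUnitary).2
  rw [Unitary.mem_iff] at hmem
  have h1 : star Um * Um = 1 := hmem.1
  have h2 : Um * star Um = 1 := hmem.2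
  have hst : Q = Um * Matrix.diagonal σ * star Um := by
    have := hQ.spectral_theorem
    rw [Unitary.conjStarAlgAut_apply] at this
    rwa [show (RCLike.ofReal ∘ hQ.eigenvalues : Fin n → ℝ) = σ by
      rw [RCLike.ofReal_real_eq_id, Function.id_comp]] at this
  set z : (Fin n → ℝ) → (Fin n → ℝ) := fun a => (star Um).mulVec a with hz
  -- F1 : dot products preserved
  have F1 : ∀ a b : Fin n → ℝ, a ⬝ᵥ b = z a ⬝ᵥ z b := by
    intro a b
    have hstarT : star Um = Umᵀ := by
      rw [Matrix.star_eq_conjTranspose]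
      ext i j
      simp [Matrix.conjTranspose_apply]
    conv_lhs => rw [show b = (Um * star Um).mulVec b by rw [h2, Matrix.one_mulVec]]
    rw [← Matrix.mulVec_mulVec, Matrix.dotProduct_mulVec]
    show a ᵥ* Um ⬝ᵥ star Um *ᵥ b = star Um *ᵥ a ⬝ᵥ star Um *ᵥ b
    rw [hstarT, Matrix.mulVec_transpose, Matrix.mulVec_transpose]
  -- recover a from z a
  have Finv : ∀ a : Fin n → ℝ, Um.mulVec (z a) = a := by
    intro a
    rw [hz, Matrix.mulVec_mulVec, h2, Matrix.one_mulVec]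
  -- F2 : quadratic form
  have F2 : ∀ a : Fin n → ℝ, a ⬝ᵥ Q.mulVec a = ∑ k, σ k * (z a k * z a k) := by
    intro a
    conv_lhs => rw [hst]
    rw [show (Um * Matrix.diagonal σ * star Um).mulVec a
        = Um.mulVec ((Matrix.diagonal σ).mulVec (z a)) by
      rw [Matrix.mulVec_mulVec, Matrix.mulVec_mulVec]]
    rw [Matrix.dotProduct_mulVec]
    have hstarT : star Um = Umᵀ := by
      rw [Matrix.star_eq_conjTranspose]; ext i j; simp [Matrix.conjTranspose_apply]
    rw [show a ᵥ* Um = z a from by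
      show a ᵥ* Um = star Um *ᵥ a
      rw [hstarT, Matrix.mulVec_transpose]]
    simp only [dotProduct, Matrix.mulVec_diagonal]
    exact Finset.sum_congr rfl fun k _ => by ring
  -- F3 : eigenvalues nonneg
  have F3 : ∀ k, 0 ≤ σ k := by
    intro k
    have hzc : z (Um.mulVec (Pi.single k 1)) = Pi.single k 1 := by
      show (star Um).mulVec (Um.mulVec (Pi.single k 1)) = Pi.single k 1
      rw [Matrix.mulVec_mulVec, h1, Matrix.one_mulVec]
    have := hpsd (Um.mulVec (Pi.single k 1))
    rw [F2, hzc] at this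
    have hsum : ∑ j, σ j * ((Pi.single k 1 : Fin n → ℝ) j * (Pi.single k 1 : Fin n → ℝ) j) = σ k := by
      rw [Finset.sum_eq_single k]
      · simp
      · intro j _ hj; simp [Pi.single_apply, hj]
      · simp
    rwa [hsum] at this
  -- F4 : diagonal kills z o
  have F4 : ∀ k, σ k * z o k = 0 := by
    intro k
    have hkey : star Um * Q = Matrix.diagonal σ * star Um := by
      rw [hst, ← mul_assoc, ← mul_assoc, h1, one_mul]
    have hdz : (Matrix.diagonal σ).mulVec (z o) = 0 := by
      have h0 : (star Um * Q) *ᵥ o = 0 := by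
        rw [← Matrix.mulVec_mulVec, ho, Matrix.mulVec_zero]
      rw [hkey, ← Matrix.mulVec_mulVec] at h0
      exact h0
    have hk2 := congrFun hdz k
    simpa [Matrix.mulVec_diagonal] using hk2
  -- F5 : z o ≠ 0
  have F5 : z o ≠ 0 := by
    intro hzo
    apply ho_ne
    have := Finv o
    rw [hzo, Matrix.mulVec_zero] at this
    exact this.symm
  -- F6
  have F6 : z y ⬝ᵥ z o = 0 := by rw [← F1]; exact hyo
  set lam := eigval Q 1 with hlam
  rcases le_or_gt lam 0 with hlam0 | hlam0
  · calc lam * (y ⬝ᵥ y) ≤ 0 := by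
          apply mul_nonpos_of_nonpos_of_nonneg hlam0
          exact Finset.sum_nonneg fun i _ => mul_self_nonneg _
      _ ≤ y ⬝ᵥ Q.mulVec y := hpsd y
  · -- at most one eigenvalue below lam
    have huniq : ∀ k k', σ k < lam → σ k' < lam → k = k' := by
      intro k k' hk hk'
      by_contra hne
      set m := sortedEigenvalues Q with hm
      have hcoe : (m : Multiset ℝ) = Finset.univ.val.map σ := by
        rw [hm, sortedEigenvalues, Multiset.sort_eq, charpoly_roots_eigen Q hQ]
      have hsort : m.Pairwise (· ≤ ·) := Multiset.pairwise_sort _ _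
      have hcount2 : 2 ≤ m.countP (fun a => decide (a < lam)) := by
        have : 2 ≤ Multiset.countP (fun a => decide (a < lam)) (Finset.univ.val.map σ) := by
          have hple : ({k, k'} : Finset (Fin n)).val ≤ Finset.univ.val :=
            Finset.val_le_iff.mpr (Finset.subset_univ _)
          have hmono := Multiset.countP_le_of_le (fun a => decide (a < lam))
            (Multiset.map_le_map (f := σ) hple)
          have hpairval : ({k, k'} : Finset (Fin n)).val = k ::ₘ k' ::ₘ 0 := by
            rw [Finset.insert_val_of_notMem (by simp [hne])]
            rfl
          have hpair : Multiset.countP (fun a => decide (a < lam))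
              (Multiset.map σ ({k, k'} : Finset (Fin n)).val) = 2 := by
            rw [hpairval, Multiset.map_cons, Multiset.map_cons, Multiset.map_zero,
              Multiset.countP_cons_of_pos _ (by simpa using hk), Multiset.countP_cons_of_pos _ (by simpa using hk'),
              Multiset.countP_zero]
          omega
        rw [← hcoe] at this
        simpa [Multiset.coe_countP] using this
      have hlen2 : 2 ≤ m.length := le_trans hcount2 List.countP_le_length
      have hsplit : m.countP (fun a => decide (a < lam))
          = (m.take 1).countP (fun a => decide (a < lam)) + (m.drop 1).countP (fun a => decide (a < lam)) := by
        conv_lhs => rw [← List.take_append_drop 1 m]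
        rw [List.countP_append]
      have htake : (m.take 1).countP (fun a => decide (a < lam)) ≤ 1 := by
        calc (m.take 1).countP _ ≤ (m.take 1).length := List.countP_le_length
          _ ≤ 1 := by simpa using List.length_take_le 1 m
      have hdrop : 1 ≤ (m.drop 1).countP (fun a => decide (a < lam)) := by omega
      have hex : ∃ x ∈ m.drop 1, x < lam := by
        obtain ⟨x, hx, hpx⟩ := List.countP_pos_iff.mp
          (show 0 < (m.drop 1).countP (fun a => decide (a < lam)) by omega)
        exact ⟨x, hx, by simpa using hpx⟩
      obtain ⟨x, hxmem, hxlt⟩ := hex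
      obtain ⟨i, hi, hix⟩ := List.mem_iff_getElem.mp hxmem
      have h1i : 1 + i < m.length := by
        rw [List.length_drop] at hi; omega
      rw [List.getElem_drop] at hix
      have h1lt : 1 < m.length := by omega
      have hlamval : lam = m[1] := by
        show m.getD 1 0 = m[1]
        exact List.getD_eq_getElem (l := m) (d := 0) h1lt
      have hle : m[1] ≤ m[1+i] := by
        have := hsort.rel_get_of_le (a := ⟨1, h1lt⟩) (b := ⟨1+i, h1i⟩) (by simp)
        simpa using this
      rw [hix] at hle
      rw [hlamval] at hxlt
      exact absurd hxlt (not_lt.mpr hle)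
    obtain ⟨k0, hk0⟩ := Function.ne_iff.mp F5
    have hσk0 : σ k0 = 0 := by
      have := F4 k0
      rcases mul_eq_zero.mp this with h | h
      · exact h
      · exact absurd h hk0
    have hothers : ∀ k, k ≠ k0 → lam ≤ σ k := by
      intro k hk
      by_contra hnot
      push_neg at hnot
      exact hk (huniq k k0 hnot (by rw [hσk0]; exact hlam0))
    have hwzero : ∀ k, k ≠ k0 → z o k = 0 := by
      intro k hk
      have hσpos : 0 < σ k := lt_of_lt_of_le hlam0 (hothers k hk)
      have := F4 k
      rcases mul_eq_zero.mp this with h | h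
      · exact absurd h (ne_of_gt hσpos)
      · exact h
    have hzy0 : z y k0 = 0 := by
      have : z y ⬝ᵥ z o = z y k0 * z o k0 := by
        rw [dotProduct, Finset.sum_eq_single k0]
        · intro j _ hj; rw [hwzero j hj, mul_zero]
        · simp
      rw [F6] at this
      rcases mul_eq_zero.mp this.symm with h | h
      · exact h
      · exact absurd h hk0
    rw [F2, F1 y y]
    have : lam * (z y ⬝ᵥ z y) = ∑ k, lam * (z y k * z y k) := by
      rw [dotProduct, Finset.mul_sum]
    rw [this]
    apply Finset.sum_le_sum
    intro k _
    rcases eq_or_ne k k0 with rfl | hk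
    · rw [hzy0]; ring_nf; exact le_refl _
    · exact mul_le_mul_of_nonneg_right (hothers k hk) (mul_self_nonneg _)

end AuxSpectral

/-- Derivative bound for the Lyapunov function `W(x) = Σᵢ vᵢ Vᵢ(xᵢ)` of the
leading component along `ẋ = F(x) − γ L x`:
`Ẇ(x) ≤ H_ℓ − γ λ₂(Q) dist(x, 𝒜)²` where `Q := diag(v) L + Lᵀ diag(v)` and
`H_ℓ := Σᵢ max{vᵢ · max_{|s| ≤ ρᵢ}(−Hᵢ(s)), 0}`. -/
theorem statement10 {n : ℕ} (L : Matrix (Fin n) (Fin n) ℝ)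
    (hLap : L.IsLaplacian) (hSC : L.IsStronglyConnectedDigraph)
    (v : Fin n → ℝ) (hv_pos : ∀ i, 0 < v i)
    (hv_left : Matrix.vecMul v L = 0)
    (hv_norm : v ⬝ᵥ (fun _ => 1) = 1)
    (f : Fin n → ℝ → ℝ) (hf : ∀ i, Continuous (f i))
    (V : Fin n → ℝ → ℝ) (V' : Fin n → ℝ → ℝ)
    (hV_nonneg : ∀ i s, 0 ≤ V i s)
    (hV_deriv : ∀ i s, HasDerivAt (V i) (V' i s) s)
    (hV'_cont : ∀ i, Continuous (V' i))
    (ρ : Fin n → ℝ) (hρ : ∀ i, 0 < ρ i)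
    (H : Fin n → ℝ → ℝ) (hH : ∀ i, Continuous (H i))
    (ψ : Fin n → ℝ → ℝ) (hψ_cont : ∀ i, Continuous (ψ i))
    (hψ_pos : ∀ i s, 0 ≤ s → 0 < ψ i s)
    (hdiss : ∀ i s u, V' i s * (f i s + u) ≤ 2 * u * s - H i s)
    (hHψ : ∀ i s, ρ i ≤ |s| → ψ i |s| ≤ H i s) :
    ∀ γ > (0:ℝ), ∀ x : Fin n → ℝ,
      ∑ i, v i * (V' i (x i) * (f i (x i) - γ * L.mulVec x i)) ≤
        (∑ i, max (v i * sSup ((fun s => -H i s) '' Set.Icc (-(ρ i)) (ρ i))) 0) -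
          γ * eigval (Matrix.diagonal v * L + Lᵀ * Matrix.diagonal v) 1 *
            euclNorm (fun i => x i - (∑ j, x j) / n) ^ 2 := by
  classical
  intro γ hγ x
  rcases Nat.eq_zero_or_pos n with hn | hn
  · subst hn
    simp [euclNorm, dotProduct, Finset.univ_eq_empty]
  set Q : Matrix (Fin n) (Fin n) ℝ := Matrix.diagonal v * L + Lᵀ * Matrix.diagonal v with hQdef
  -- symmetry
  have hQsymmT : Qᵀ = Q := by
    rw [hQdef, Matrix.transpose_add, Matrix.transpose_mul, Matrix.transpose_mul,
      Matrix.diagonal_transpose, Matrix.transpose_transpose, add_comm]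
  have hQherm : Q.IsHermitian := by
    show Qᴴ = Q
    have : Qᴴ = Qᵀ := by
      ext i j; simp [Matrix.conjTranspose_apply]
    rw [this, hQsymmT]
  -- Q annihilates constants
  have hL1 : L *ᵥ (fun _ => (1:ℝ)) = 0 := hLap.2
  have hLv : Lᵀ *ᵥ v = 0 := by rw [Matrix.mulVec_transpose]; exact hv_left
  have hdiag1 : (Matrix.diagonal v) *ᵥ (fun _ => (1:ℝ)) = v := by
    ext i; simp [Matrix.mulVec_diagonal]
  have hQ1 : Q *ᵥ (fun _ => (1:ℝ)) = 0 := by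
    rw [hQdef, Matrix.add_mulVec, ← Matrix.mulVec_mulVec, ← Matrix.mulVec_mulVec,
      hL1, Matrix.mulVec_zero, hdiag1, hLv, add_zero]
  have hrow : ∀ i, ∑ j, Q i j = 0 := by
    intro i
    have := congrFun hQ1 i
    simpa [Matrix.mulVec, dotProduct] using this
  have hsymm_ap : ∀ i j, Q i j = Q j i := by
    intro i j
    have := congrFun (congrFun hQsymmT j) i
    simpa [Matrix.transpose_apply] using this
  have hcol : ∀ j, ∑ i, Q i j = 0 := by
    intro j
    calc ∑ i, Q i j = ∑ i, Q j i := Finset.sum_congr rfl fun i _ => hsymm_ap i j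
      _ = 0 := hrow j
  have hoff : ∀ i j, i ≠ j → Q i j ≤ 0 := by
    intro i j hij
    have : Q i j = v i * L i j + L j i * v j := by
      simp [hQdef, Matrix.add_apply, Matrix.diagonal_mul, Matrix.mul_diagonal,
        Matrix.transpose_apply]
    rw [this]
    have h1 := mul_nonpos_of_nonneg_of_nonpos (hv_pos i).le (hLap.1 i j hij)
    have h2 := mul_nonpos_of_nonpos_of_nonneg (hLap.1 j i (Ne.symm hij)) (hv_pos j).le
    linarith
  -- PSD
  have hpsd : ∀ w : Fin n → ℝ, 0 ≤ w ⬝ᵥ Q *ᵥ w := by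
    intro w
    have hdot : w ⬝ᵥ Q *ᵥ w = ∑ i, ∑ j, w i * (Q i j * w j) := by
      simp [dotProduct, Matrix.mulVec, Finset.mul_sum]
    have hA : ∑ i, ∑ j, Q i j * (w i * w i) = 0 := by
      calc ∑ i, ∑ j, Q i j * (w i * w i) = ∑ i, (∑ j, Q i j) * (w i * w i) :=
            Finset.sum_congr rfl fun i _ => by rw [Finset.sum_mul]
        _ = 0 := by simp [hrow]
    have hB : ∑ i, ∑ j, Q i j * (w j * w j) = 0 := by
      rw [Finset.sum_comm]
      calc ∑ j, ∑ i, Q i j * (w j * w j) = ∑ j, (∑ i, Q i j) * (w j * w j) :=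
            Finset.sum_congr rfl fun j _ => by rw [Finset.sum_mul]
        _ = 0 := by simp [hcol]
    have key : ∑ i, ∑ j, (-(Q i j)) * (w i - w j)^2
        = 2 * (∑ i, ∑ j, w i * (Q i j * w j))
          - (∑ i, ∑ j, Q i j * (w i * w i)) - (∑ i, ∑ j, Q i j * (w j * w j)) := by
      rw [Finset.mul_sum, ← Finset.sum_sub_distrib, ← Finset.sum_sub_distrib]
      refine Finset.sum_congr rfl fun i _ => ?_
      rw [Finset.mul_sum, ← Finset.sum_sub_distrib, ← Finset.sum_sub_distrib]
      refine Finset.sum_congr rfl fun j _ => ?_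
      ring
    have hnn : 0 ≤ ∑ i, ∑ j, (-(Q i j)) * (w i - w j)^2 := by
      refine Finset.sum_nonneg fun i _ => Finset.sum_nonneg fun j _ => ?_
      rcases eq_or_ne i j with rfl | hij
      · simp
      · exact mul_nonneg (neg_nonneg.mpr (hoff i j hij)) (sq_nonneg _)
    rw [hdot]
    linarith [key, hA, hB, hnn]
  -- quadratic form along x
  have hxQx : x ⬝ᵥ Q *ᵥ x = ∑ i, 2 * (v i * x i * L.mulVec x i) := by
    rw [hQdef, Matrix.add_mulVec, dotProduct_add,
      ← Matrix.mulVec_mulVec, ← Matrix.mulVec_mulVec,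
      Matrix.dotProduct_mulVec x Lᵀ _, Matrix.vecMul_transpose]
    simp only [dotProduct, Matrix.mulVec_diagonal]
    rw [← Finset.sum_add_distrib]
    exact Finset.sum_congr rfl fun i _ => by ring
  -- dissipation step
  have step1 : ∑ i, v i * (V' i (x i) * (f i (x i) - γ * L.mulVec x i)) ≤
      ∑ i, v i * (2 * (-(γ * L.mulVec x i)) * x i - H i (x i)) := by
    apply Finset.sum_le_sum
    intro i _
    apply mul_le_mul_of_nonneg_left _ (hv_pos i).le
    have := hdiss i (x i) (-(γ * L.mulVec x i))
    simpa [sub_eq_add_neg] using this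
  have step2 : ∑ i, v i * (2 * (-(γ * L.mulVec x i)) * x i - H i (x i))
      = (∑ i, v i * (-(H i (x i)))) - γ * (x ⬝ᵥ Q *ᵥ x) := by
    rw [hxQx, Finset.mul_sum, ← Finset.sum_sub_distrib]
    exact Finset.sum_congr rfl fun i _ => by ring
  have step3 : ∀ i, v i * (-(H i (x i))) ≤
      max (v i * sSup ((fun s => -H i s) '' Set.Icc (-(ρ i)) (ρ i))) 0 := by
    intro i
    rcases le_or_gt |x i| (ρ i) with hle | hgt
    · refine le_trans ?_ (le_max_left _ _)
      apply mul_le_mul_of_nonneg_left _ (hv_pos i).le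
      apply le_csSup
      · exact IsCompact.bddAbove_image isCompact_Icc ((hH i).neg.continuousOn)
      · obtain ⟨h1, h2⟩ := abs_le.mp hle
        exact ⟨x i, ⟨h1, h2⟩, rfl⟩
    · refine le_trans ?_ (le_max_right _ _)
      have hH0 : 0 < H i (x i) :=
        lt_of_lt_of_le (hψ_pos i |x i| (abs_nonneg _)) (hHψ i (x i) hgt.le)
      nlinarith [hv_pos i]
  -- centered vector
  set c : ℝ := (∑ j, x j) / n with hc
  set y : Fin n → ℝ := fun i => x i - c with hy
  have hydef : y = x - c • (fun _ => (1:ℝ)) := by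
    ext i; simp [hy]
  have hyo : y ⬝ᵥ (fun _ => (1:ℝ)) = 0 := by
    have hsum : ∑ i : Fin n, (x i - c) = 0 := by
      rw [Finset.sum_sub_distrib, Finset.sum_const, Finset.card_fin, nsmul_eq_mul, hc]
      field_simp
      ring
    simpa [dotProduct, hy] using hsum
  have ho_ne : (fun _ => (1:ℝ)) ≠ (0 : Fin n → ℝ) := by
    intro h
    have := congrFun h ⟨0, hn⟩
    norm_num at this
  have hQy : Q *ᵥ y = Q *ᵥ x := by
    rw [hydef, Matrix.mulVec_sub, Matrix.mulVec_smul, hQ1, smul_zero, sub_zero]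
  have h1Qx : (fun _ => (1:ℝ)) ⬝ᵥ Q *ᵥ x = 0 := by
    rw [Matrix.dotProduct_mulVec]
    have hvm : (fun _ => (1:ℝ)) ᵥ* Q = 0 := by
      rw [← hQsymmT, Matrix.vecMul_transpose, hQ1]
    rw [hvm, zero_dotProduct]
  have hyQy : y ⬝ᵥ Q *ᵥ y = x ⬝ᵥ Q *ᵥ x := by
    rw [hQy, hydef, sub_dotProduct, smul_dotProduct, h1Qx, smul_zero, sub_zero]
  have hynn : 0 ≤ y ⬝ᵥ y := Finset.sum_nonneg fun i _ => mul_self_nonneg _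
  have hnorm : euclNorm y ^ 2 = y ⬝ᵥ y := Real.sq_sqrt hynn
  have hspec := quad_lower_bound Q hQherm hpsd (fun _ => (1:ℝ)) hQ1 ho_ne y hyo
  calc ∑ i, v i * (V' i (x i) * (f i (x i) - γ * L.mulVec x i))
      ≤ ∑ i, v i * (2 * (-(γ * L.mulVec x i)) * x i - H i (x i)) := step1
    _ = (∑ i, v i * (-(H i (x i)))) - γ * (x ⬝ᵥ Q *ᵥ x) := step2
    _ ≤ (∑ i, max (v i * sSup ((fun s => -H i s) '' Set.Icc (-(ρ i)) (ρ i))) 0)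
        - γ * (eigval Q 1 * euclNorm y ^ 2) := by
        apply sub_le_sub (Finset.sum_le_sum fun i _ => step3 i)
        apply mul_le_mul_of_nonneg_left _ hγ.le
        rw [hnorm, ← hyQy]
        exact hspec
    _ = (∑ i, max (v i * sSup ((fun s => -H i s) '' Set.Icc (-(ρ i)) (ρ i))) 0)
        - γ * eigval Q 1 * euclNorm y ^ 2 := by ring
end
end

section
/- Let L ∈ ℝ^{n×n} be the Laplacian matrix of a weighted digraph that is connected and contains a directed spanning tree (i.e., there exists a node from which every other node is reachable by a directed path). Then there exists a permutation matrix P and integers n_ℓ ≥ 1, n_f ≥ 0 with n_ℓ + n_f = n such that P L Pᵀ = [[L_ℓ, 0], [−A, M]], where L_ℓ ∈ ℝ^{n_ℓ×n_ℓ} is the Laplacian matrix of a strongly connected weighted digraph, A ∈ ℝ^{n_f×n_ℓ} is entrywise nonnegative, and M ∈ ℝ^{n_f×n_f} is a nonsingular M-matrix. -/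
open Matrix Filter Set

noncomputable section

open Finset in
/-- Auxiliary: a matrix with nonpositive off-diagonal entries, nonnegative row sums,
in which every node is reachable from a node with strictly positive row sum
(along edges `a → b` when `M b a < 0`), is a nonsingular M-matrix. -/
lemma mmatrixAux {nf : ℕ} (M : Matrix (Fin nf) (Fin nf) ℝ)
    (hoff : ∀ i j, i ≠ j → M i j ≤ 0)
    (hrow : ∀ i, 0 ≤ ∑ j, M i j)
    (hreach : ∀ i, ∃ k, (0 < ∑ j, M k j) ∧
      Relation.ReflTransGen (fun a b => M b a < 0) k i) :
    M.IsNonsingularMMatrix := by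
  classical
  refine ⟨hoff, ?_⟩
  intro μ hμ
  by_contra hre
  push_neg at hre
  set Mc := M.map (fun a => (a : ℂ)) with hMc
  have hev : Mc.charpoly.eval μ = 0 := Polynomial.isRoot_of_mem_roots hμ
  have hdet : (μ • (1 : Matrix (Fin nf) (Fin nf) ℂ) - Mc).det = 0 := by
    have h1 := RingHom.map_det (Polynomial.evalRingHom μ) Mc.charmatrix
    have h2 : (Polynomial.evalRingHom μ).mapMatrix Mc.charmatrix = μ • 1 - Mc := by
      ext i j
      by_cases h : i = j <;>
        simp [h, Matrix.charmatrix_apply, Matrix.diagonal_apply, Matrix.one_apply,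
          Matrix.sub_apply]
    rw [h2] at h1
    rw [← h1]
    simpa [Matrix.charpoly] using hev
  obtain ⟨x, hx0, hxe⟩ := Matrix.exists_mulVec_eq_zero_iff.mpr hdet
  have hrowEq : ∀ i, ∑ j, (M i j : ℂ) * x j = μ * x i := by
    intro i
    have h0 := congrFun hxe i
    simp only [mulVec, dotProduct, Matrix.sub_apply, Matrix.smul_apply, one_apply, Pi.zero_apply,
      smul_eq_mul] at h0
    have h2 : ∑ j, ((if i = j then μ else 0) - Mc i j) * x j = 0 := by
      convert h0 using 3 with j
      split <;> simp
    rw [Finset.sum_congr rfl (fun j _ => sub_mul _ _ _), Finset.sum_sub_distrib] at h2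
    simp only [ite_mul, zero_mul, Finset.sum_ite_eq, Finset.mem_univ, if_true] at h2
    have h3 : ∑ j, (M i j : ℂ) * x j = ∑ j, Mc i j * x j := rfl
    rw [h3]
    linear_combination -h2
  obtain ⟨k0, hk0⟩ := Function.ne_iff.mp hx0
  obtain ⟨i0, -, hi0⟩ := Finset.exists_max_image Finset.univ (fun j => ‖x j‖)
    ⟨k0, Finset.mem_univ k0⟩
  set m := ‖x i0‖ with hm
  have hmpos : 0 < m := lt_of_lt_of_le (by simpa using hk0) (hi0 k0 (Finset.mem_univ k0))
  have hxle : ∀ j, ‖x j‖ ≤ m := fun j => hi0 j (Finset.mem_univ j)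
  have hrd : ∀ i, ∑ j ∈ univ.erase i, (-M i j) ≤ M i i := by
    intro i
    have h1 : M i i + ∑ j ∈ univ.erase i, M i j = ∑ j, M i j :=
      Finset.add_sum_erase univ (fun j => M i j) (Finset.mem_univ i)
    have := hrow i
    have h2 : ∑ j ∈ univ.erase i, (-M i j) = -∑ j ∈ univ.erase i, M i j := by
      rw [Finset.sum_neg_distrib]
    linarith
  have hrnn : ∀ i, (0:ℝ) ≤ ∑ j ∈ univ.erase i, (-M i j) := by
    intro i
    apply Finset.sum_nonneg
    intro j hj
    have := hoff i j (fun h => (Finset.mem_erase.mp hj).1 h.symm)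
    linarith
  have hdnn : ∀ i, (0:ℝ) ≤ M i i := fun i => le_trans (hrnn i) (hrd i)
  have hoffEq : ∀ i, (μ - (M i i : ℂ)) * x i = ∑ j ∈ univ.erase i, (M i j : ℂ) * x j := by
    intro i
    have h1 : (M i i : ℂ) * x i + ∑ j ∈ univ.erase i, (M i j : ℂ) * x j
        = ∑ j, (M i j : ℂ) * x j :=
      Finset.add_sum_erase univ (fun j => (M i j : ℂ) * x j) (Finset.mem_univ i)
    rw [hrowEq i] at h1
    linear_combination -h1
  have hbound : ∀ i, ‖x i‖ = m →
      ‖μ - (M i i : ℂ)‖ * m ≤ ∑ j ∈ univ.erase i, (-M i j) * ‖x j‖ := by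
    intro i hxi
    rw [← hxi, ← norm_mul, hoffEq i]
    refine le_trans (norm_sum_le _ _) (le_of_eq (Finset.sum_congr rfl ?_))
    intro j hj
    rw [norm_mul, Complex.norm_real, Real.norm_eq_abs, abs_of_nonpos
      (hoff i j (fun h => (Finset.mem_erase.mp hj).1 h.symm))]
  have hsumle : ∀ i, ∑ j ∈ univ.erase i, (-M i j) * ‖x j‖
      ≤ (∑ j ∈ univ.erase i, (-M i j)) * m := by
    intro i
    rw [Finset.sum_mul]
    refine Finset.sum_le_sum ?_
    intro j hj
    have h1 : (0:ℝ) ≤ -M i j := by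
      have := hoff i j (fun h => (Finset.mem_erase.mp hj).1 h.symm); linarith
    exact mul_le_mul_of_nonneg_left (hxle j) h1
  have hμ0 : μ = 0 := by
    have h1 := hbound i0 rfl
    have h2 := le_trans h1 (hsumle i0)
    have h3 : ‖μ - (M i0 i0 : ℂ)‖ ≤ M i0 i0 := by
      have := le_trans h2 (mul_le_mul_of_nonneg_right (hrd i0) (le_of_lt hmpos))
      exact le_of_mul_le_mul_right this hmpos
    have h4 : ‖μ - (M i0 i0 : ℂ)‖ ^ 2 ≤ (M i0 i0) ^ 2 := by
      have := norm_nonneg (μ - (M i0 i0 : ℂ))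
      nlinarith
    rw [Complex.sq_norm, Complex.normSq_apply] at h4
    simp only [Complex.sub_re, Complex.ofReal_re, Complex.sub_im, Complex.ofReal_im, sub_zero] at h4
    have hd := hdnn i0
    have hre0 : μ.re = 0 := by
      nlinarith [sq_nonneg μ.im, mul_nonneg hd (neg_nonneg.mpr hre)]
    have him0 : μ.im = 0 := by
      nlinarith [sq_nonneg μ.re, mul_nonneg hd (neg_nonneg.mpr hre)]
    exact Complex.ext (by simp [hre0]) (by simp [him0])
  subst hμ0
  have hprop : ∀ c, ‖x c‖ = m →
      ((0 < ∑ j, M c j → False) ∧ ∀ b, M c b < 0 → ‖x b‖ = m) := by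
    intro c hxc
    have h1 := hbound c hxc
    simp only [zero_sub, norm_neg, Complex.norm_real, Real.norm_eq_abs, abs_of_nonneg (hdnn c)] at h1
    have h2 := hsumle c
    have h3 : (∑ j ∈ univ.erase c, (-M c j)) * m ≤ M c c * m :=
      mul_le_mul_of_nonneg_right (hrd c) (le_of_lt hmpos)
    constructor
    · intro hposrow
      have hlt : ∑ j ∈ univ.erase c, (-M c j) < M c c := by
        have ha : M c c + ∑ j ∈ univ.erase c, M c j = ∑ j, M c j :=
          Finset.add_sum_erase univ (fun j => M c j) (Finset.mem_univ c)
        have hb : ∑ j ∈ univ.erase c, (-M c j) = -∑ j ∈ univ.erase c, M c j := by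
          rw [Finset.sum_neg_distrib]
        linarith
      nlinarith
    · intro b hb
      by_contra hne
      have hblt : ‖x b‖ < m := lt_of_le_of_ne (hxle b) hne
      have hbc : b ≠ c := by
        intro h; subst h; exact absurd hb (not_lt.mpr (hdnn b))
      have hstrict : ∑ j ∈ univ.erase c, (-M c j) * ‖x j‖
          < ∑ j ∈ univ.erase c, (-M c j) * m := by
        refine Finset.sum_lt_sum ?_ ⟨b, Finset.mem_erase.mpr ⟨hbc, Finset.mem_univ b⟩, ?_⟩
        · intro j hj
          have h1 : (0:ℝ) ≤ -M c j := by
            have := hoff c j (fun h => (Finset.mem_erase.mp hj).1 h.symm); linarith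
          exact mul_le_mul_of_nonneg_left (hxle j) h1
        · exact mul_lt_mul_of_pos_left hblt (by linarith)
      rw [← Finset.sum_mul] at hstrict
      nlinarith
  have hwalk : ∀ k c, Relation.ReflTransGen (fun a b => M b a < 0) k c →
      ‖x c‖ = m → ‖x k‖ = m := by
    intro k c hpath
    induction hpath with
    | refl => exact id
    | tail _ hbc ih => exact fun hc => ih ((hprop _ hc).2 _ hbc)
  obtain ⟨k, hk1, hk2⟩ := hreach i0
  exact (hprop k (hwalk k i0 hk2 rfl)).1 hk1

theorem statement12 {n : ℕ} (L : Matrix (Fin n) (Fin n) ℝ)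
    (hLap : L.IsLaplacian)
    (hTree : ∃ root : Fin n, ∀ j : Fin n, j ≠ root →
      Relation.TransGen L.digraphEdge root j) :
    ∃ (nl nf : ℕ), 1 ≤ nl ∧ nl + nf = n ∧
      ∃ (e : Fin n ≃ (Fin nl ⊕ Fin nf))
        (Lℓ : Matrix (Fin nl) (Fin nl) ℝ)
        (A : Matrix (Fin nf) (Fin nl) ℝ)
        (M : Matrix (Fin nf) (Fin nf) ℝ),
        Matrix.reindex e e L = Matrix.fromBlocks Lℓ 0 (-A) M ∧
        Lℓ.IsLaplacian ∧ Lℓ.IsStronglyConnectedDigraph ∧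
        (∀ i j, 0 ≤ A i j) ∧ M.IsNonsingularMMatrix := by
  classical
  obtain ⟨r, hr⟩ := hTree
  have hLe := hLap.1
  have hrowsum : ∀ b, ∑ a, L b a = 0 := by
    intro b
    have := congrFun hLap.2 b
    simpa [Matrix.mulVec, dotProduct] using this
  set p : Fin n → Prop := fun x => Relation.ReflTransGen L.digraphEdge x r with hp
  have hpr : p r := Relation.ReflTransGen.refl
  have hreachAll : ∀ x, Relation.ReflTransGen L.digraphEdge r x := by
    intro x
    by_cases h : x = r
    · subst h; exact Relation.ReflTransGen.refl
    · exact (hr x h).to_reflTransGen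
  -- the zero block
  have hzero : ∀ a b, p a → ¬ p b → L a b = 0 := by
    intro a b hpa hpb
    have hne : a ≠ b := by rintro rfl; exact hpb hpa
    by_contra h
    have hlt : L a b < 0 := lt_of_le_of_ne (hLe a b hne) h
    exact hpb (Relation.ReflTransGen.head ⟨Ne.symm hne, hlt⟩ hpa)
  set nl := Fintype.card {x // p x} with hnl
  set nf := Fintype.card {x // ¬ p x} with hnf
  set eS : {x // p x} ≃ Fin nl := Fintype.equivFin _ with heS
  set eF : {x // ¬ p x} ≃ Fin nf := Fintype.equivFin _ with heF
  set e : Fin n ≃ Fin nl ⊕ Fin nf := (Equiv.sumCompl p).symm.trans (eS.sumCongr eF) with he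
  set gS : Fin nl → Fin n := fun i => (eS.symm i).1 with hgS
  set gF : Fin nf → Fin n := fun j => (eF.symm j).1 with hgF
  have hgSp : ∀ i, p (gS i) := fun i => (eS.symm i).2
  have hgFp : ∀ j, ¬ p (gF j) := fun j => (eF.symm j).2
  have hesymm1 : ∀ i, e.symm (Sum.inl i) = gS i := by intro i; simp [he, hgS]
  have hesymm2 : ∀ j, e.symm (Sum.inr j) = gF j := by intro j; simp [he, hgF]
  have hgSinj : Function.Injective gS := fun i j h =>
    eS.symm.injective (Subtype.ext h)
  have hgFinj : Function.Injective gF := fun i j h =>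
    eF.symm.injective (Subtype.ext h)
  have hgSeS : ∀ (a : Fin n) (ha : p a), gS (eS ⟨a, ha⟩) = a := by
    intro a ha; simp [hgS]
  have hgFeF : ∀ (a : Fin n) (ha : ¬ p a), gF (eF ⟨a, ha⟩) = a := by
    intro a ha; simp [hgF]
  -- split row sums
  have hsplit : ∀ b, (∑ i, L b (gS i)) + (∑ j, L b (gF j)) = 0 := by
    intro b
    have h1 : ∑ x : Fin nl ⊕ Fin nf, L b (e.symm x) = ∑ a, L b a :=
      Equiv.sum_comp e.symm (fun a => L b a)
    rw [Fintype.sum_sum_type] at h1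
    simp only [hesymm1, hesymm2] at h1
    rw [h1, hrowsum b]
  refine ⟨nl, nf, ?_, ?_, e, Matrix.of (fun i j => L (gS i) (gS j)),
    Matrix.of (fun i j => -L (gF i) (gS j)), Matrix.of (fun i j => L (gF i) (gF j)),
    ?_, ⟨?_, ?_⟩, ?_, ?_, ?_⟩
  · exact Fintype.card_pos_iff.mpr ⟨⟨r, hpr⟩⟩
  · rw [hnl, hnf, ← Fintype.card_sum]
    rw [Fintype.card_congr (Equiv.sumCompl p)]
    simp
  · -- block form
    ext x y
    cases x with
    | inl i =>
      cases y with
      | inl j => simp [Matrix.reindex_apply, Matrix.submatrix_apply, hesymm1]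
      | inr j =>
        simp only [Matrix.reindex_apply, Matrix.submatrix_apply, hesymm1, hesymm2,
          Matrix.fromBlocks_apply₁₂, Matrix.zero_apply]
        exact hzero _ _ (hgSp i) (hgFp j)
    | inr i =>
      cases y with
      | inl j =>
        simp [Matrix.reindex_apply, Matrix.submatrix_apply, hesymm1, hesymm2]
      | inr j => simp [Matrix.reindex_apply, Matrix.submatrix_apply, hesymm2]
  · -- Lℓ off-diagonal
    intro i j hij
    exact hLe _ _ (fun h => hij (hgSinj h))
  · -- Lℓ row sums
    funext i
    have h1 : ∀ j, L (gS i) (gF j) = 0 := fun j => hzero _ _ (hgSp i) (hgFp j)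
    have h2 := hsplit (gS i)
    simp only [h1, Finset.sum_const_zero, add_zero] at h2
    simp [Matrix.mulVec, dotProduct, h2]
  · -- strong connectivity
    set R : Fin n → Fin n → Prop := fun x y => L.digraphEdge x y ∧ p x ∧ p y with hR
    have hinS : ∀ a b, Relation.TransGen L.digraphEdge a b → p b →
        Relation.TransGen R a b := by
      intro a b hab hpb
      induction hab using Relation.TransGen.head_induction_on with
      | single h =>
        exact Relation.TransGen.single ⟨h, Relation.ReflTransGen.head h hpb, hpb⟩
      | head h₁ h₂ ih =>
        have hpc : p _ := Relation.ReflTransGen.trans h₂.to_reflTransGen hpb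
        exact Relation.TransGen.head ⟨h₁, Relation.ReflTransGen.head h₁ hpc, hpc⟩ ih
    set f : Fin n → Fin nl := fun x => if h : p x then eS ⟨x, h⟩ else eS ⟨r, hpr⟩ with hf
    have hfgS : ∀ i, f (gS i) = i := by
      intro i
      rw [hf]
      simp only [hgSp i, dif_pos]
      have : (⟨gS i, hgSp i⟩ : {x // p x}) = eS.symm i := Subtype.ext rfl
      rw [this, Equiv.apply_symm_apply]
    have hlift : ∀ x y, R x y →
        (Matrix.of (fun i j => L (gS i) (gS j))).digraphEdge (f x) (f y) := by
      intro x y ⟨hxy, hpx, hpy⟩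
      constructor
      · intro h
        apply hxy.1
        have := congrArg gS h
        simp only [hf, dif_pos hpx, dif_pos hpy] at this
        rwa [hgSeS, hgSeS] at this
      · show L (gS (f y)) (gS (f x)) < 0
        simp only [hf, dif_pos hpx, dif_pos hpy, hgSeS]
        exact hxy.2
    intro i j hij
    have hab : gS i ≠ gS j := fun h => hij (hgSinj h)
    have hpath : Relation.TransGen L.digraphEdge (gS i) (gS j) := by
      by_cases hjr : gS j = r
      · rcases (Relation.reflTransGen_iff_eq_or_transGen.mp (hgSp i)) with h | h
        · exact absurd (h.symm.trans hjr.symm) hab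
        · rw [hjr]; exact h
      · exact Relation.TransGen.trans_right (hgSp i) (hr _ hjr)
    have : Relation.TransGen _ (f (gS i)) (f (gS j)) :=
      Relation.TransGen.lift f hlift _ _ (hinS _ _ hpath (hgSp j))
    rwa [hfgS, hfgS] at this
  · -- A nonneg
    intro i j
    have hne : gF i ≠ gS j := by
      intro h; exact hgFp i (h ▸ hgSp j)
    have := hLe (gF i) (gS j) hne
    simp only [Matrix.of_apply]
    linarith
  · -- M nonsingular M-matrix
    have hrowM : ∀ i, (0:ℝ) ≤ ∑ j, (Matrix.of (fun i j => L (gF i) (gF j))) i j := by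
      intro i
      have h2 := hsplit (gF i)
      have h3 : (0:ℝ) ≤ -∑ k, L (gF i) (gS k) := by
        rw [← Finset.sum_neg_distrib]
        apply Finset.sum_nonneg
        intro k _
        have hne : gF i ≠ gS k := fun h => hgFp i (h ▸ hgSp k)
        have := hLe (gF i) (gS k) hne
        linarith
      simp only [Matrix.of_apply]
      linarith
    apply mmatrixAux
    · intro i j hij
      exact hLe _ _ (fun h => hij (hgFinj h))
    · exact hrowM
    · -- reachability
      intro i
      set edge' : Fin nf → Fin nf → Prop :=
        fun a b => (Matrix.of (fun i j => L (gF i) (gF j))) b a < 0 with hedge'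
      have claim : ∀ b, Relation.ReflTransGen L.digraphEdge r b →
          ∀ hb : ¬ p b, ∃ k, (0 < ∑ j, (Matrix.of (fun i j => L (gF i) (gF j))) k j) ∧
            Relation.ReflTransGen edge' k (eF ⟨b, hb⟩) := by
        intro b hrb
        induction hrb with
        | refl => intro hb; exact absurd hpr hb
        | tail hrb' hbc ih =>
          rename_i b' c'
          intro hc
          by_cases hb : p b'
          · refine ⟨eF ⟨c', hc⟩, ?_, Relation.ReflTransGen.refl⟩
            have hrsum := hsplit c'
            have hpos : 0 < ∑ k, (-L c' (gS k)) := by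
              apply Finset.sum_pos' (fun k _ => by
                have hne : c' ≠ gS k := fun h => hc (h ▸ hgSp k)
                have := hLe c' (gS k) hne; linarith)
              refine ⟨eS ⟨b', hb⟩, Finset.mem_univ _, ?_⟩
              rw [hgSeS]
              linarith [hbc.2]
            have hs : ∑ k, (-L c' (gS k)) = -∑ k, L c' (gS k) := by
              rw [Finset.sum_neg_distrib]
            simp only [Matrix.of_apply, hgFeF]
            linarith
          · obtain ⟨k, hk1, hk2⟩ := ih hb
            refine ⟨k, hk1, Relation.ReflTransGen.tail hk2 ?_⟩
            show (Matrix.of (fun i j => L (gF i) (gF j))) (eF ⟨c', hc⟩) (eF ⟨b', hb⟩) < 0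
            simp only [Matrix.of_apply, hgFeF]
            exact hbc.2
      obtain ⟨k, hk1, hk2⟩ := claim (gF i) (hreachAll (gF i)) (hgFp i)
      refine ⟨k, hk1, ?_⟩
      have : eF ⟨gF i, hgFp i⟩ = i := by
        have : (⟨gF i, hgFp i⟩ : {x // ¬ p x}) = eF.symm i := Subtype.ext rfl
        rw [this, Equiv.apply_symm_apply]
      rwa [this] at hk2
end
end
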